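/- arXiv:2301.13579 — 3 statements merged into one kernel-verified Lean document; each statement's English description precedes it below -/
import Mathlib

section
/- Let K = ℂ(x₁,…,x_m) and let N be a difference module over K that is finite-dimensional as a K-vector space and simple. Then the ℂ-vector space of endomorphisms of N has dimension 1; equivalently, every endomorphism of N is a complex scalar multiple of the identity map. -/
noncomputable section

/-- The ℂ-algebra automorphism of ℂ[x₁,…,x_m] substituting x_j ↦ x_j + c_j. -/
def shiftPolyEquiv (m : ℕ) (c : Fin m → ℂ) :
    MvPolynomial (Fin m) ℂ ≃ₐ[ℂ] MvPolynomial (Fin m) ℂ :=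
  AlgEquiv.ofAlgHom
    (MvPolynomial.aeval fun j => MvPolynomial.X j + MvPolynomial.C (c j))
    (MvPolynomial.aeval fun j => MvPolynomial.X j - MvPolynomial.C (c j))
    (by apply MvPolynomial.algHom_ext; intro j; simp)
    (by apply MvPolynomial.algHom_ext; intro j; simp)

/-- The rational function field K = ℂ(x₁,…,x_m). -/
abbrev Kfield (m : ℕ) : Type := FractionRing (MvPolynomial (Fin m) ℂ)

/-- The shift automorphism τ_j : x_j ↦ x_j + 1 of K = ℂ(x₁,…,x_m). -/
def tau (m : ℕ) (j : Fin m) : Kfield m ≃+* Kfield m :=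
  IsFractionRing.ringEquivOfRingEquiv (shiftPolyEquiv m (Pi.single j 1)).toRingEquiv

lemma shiftPolyEquiv_comp (m : ℕ) (c d : Fin m → ℂ) (p : MvPolynomial (Fin m) ℂ) :
    shiftPolyEquiv m c (shiftPolyEquiv m d p) = shiftPolyEquiv m (c + d) p := by
  have h : ((shiftPolyEquiv m c).toAlgHom.comp (shiftPolyEquiv m d).toAlgHom) =
      (shiftPolyEquiv m (c + d)).toAlgHom := by
    apply MvPolynomial.algHom_ext
    intro j
    simp [shiftPolyEquiv, add_assoc]
  exact DFunLike.congr_fun h p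

lemma shiftPolyEquiv_zero (m : ℕ) (p : MvPolynomial (Fin m) ℂ) :
    shiftPolyEquiv m 0 p = p := by
  have h : (shiftPolyEquiv m 0).toAlgHom = AlgHom.id ℂ (MvPolynomial (Fin m) ℂ) := by
    apply MvPolynomial.algHom_ext
    intro j
    simp [shiftPolyEquiv]
  exact DFunLike.congr_fun h p

lemma eval_shiftPolyEquiv (m : ℕ) (c : Fin m → ℂ) (p : MvPolynomial (Fin m) ℂ)
    (x : Fin m → ℂ) :
    MvPolynomial.eval x (shiftPolyEquiv m c p) = MvPolynomial.eval (x + c) p := by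
  induction p using MvPolynomial.induction_on with
  | C a => simp [shiftPolyEquiv]
  | add p q hp hq => simp [map_add, hp, hq]
  | mul_X p j hp =>
    have hx : shiftPolyEquiv m c (MvPolynomial.X j)
        = MvPolynomial.X j + MvPolynomial.C (c j) := by
      simp [shiftPolyEquiv]
    rw [map_mul, hx, map_mul, hp]
    simp

lemma tau_algebraMap (m : ℕ) (j : Fin m) (p : MvPolynomial (Fin m) ℂ) :
    tau m j (algebraMap (MvPolynomial (Fin m) ℂ) (Kfield m) p) =
      algebraMap (MvPolynomial (Fin m) ℂ) (Kfield m)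
        (shiftPolyEquiv m (Pi.single j 1) p) :=
  IsFractionRing.ringEquivOfRingEquiv_algebraMap _ p

lemma tau_C (m : ℕ) (j : Fin m) (c : ℂ) :
    tau m j (algebraMap (MvPolynomial (Fin m) ℂ) (Kfield m) (MvPolynomial.C c)) =
      algebraMap (MvPolynomial (Fin m) ℂ) (Kfield m) (MvPolynomial.C c) := by
  rw [tau_algebraMap]
  congr 1
  simp [shiftPolyEquiv]


lemma grid_vanish : ∀ (k : ℕ) (h : MvPolynomial (Fin k) ℂ) (z : Fin k → ℂ),
    (∀ v : Fin k → ℕ, MvPolynomial.eval (z + fun i => (v i : ℂ)) h = 0) → h = 0 := by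
  intro k
  induction k with
  | zero =>
    intro h z hz
    have h0 := hz 0
    rw [MvPolynomial.eq_C_of_isEmpty h] at h0 ⊢
    simpa using h0
  | succ k ih =>
    intro h z hz
    have key : ∀ (v' : Fin k → ℕ) (d : ℕ),
        MvPolynomial.eval ((Fin.tail z) + fun i => (v' i : ℂ))
          ((MvPolynomial.finSuccEquiv ℂ k h).coeff d) = 0 := by
      intro v' d
      have hr : (Polynomial.map (MvPolynomial.eval ((Fin.tail z) + fun i => (v' i : ℂ)))
          (MvPolynomial.finSuccEquiv ℂ k h)) = 0 := by
        apply Polynomial.eq_zero_of_infinite_isRoot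
        apply Set.Infinite.mono (s := Set.range (fun n : ℕ => z 0 + (n : ℂ)))
        · rintro _ ⟨n, rfl⟩
          have hv := hz (Fin.cons n v')
          have hpt : (z + fun i => ((Fin.cons n v' : Fin (k+1) → ℕ) i : ℂ))
              = Fin.cons (z 0 + (n : ℂ)) ((Fin.tail z) + fun i => (v' i : ℂ)) := by
            funext i
            refine Fin.cases ?_ (fun i => ?_) i <;> simp [Fin.tail]
          rw [hpt, MvPolynomial.eval_eq_eval_mv_eval'] at hv
          exact hv
        · apply Set.infinite_range_of_injective
          intro a b hab
          exact_mod_cast add_left_cancel hab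
      have := congrArg (fun r => Polynomial.coeff r d) hr
      simpa [Polynomial.coeff_map] using this
    have hfs : MvPolynomial.finSuccEquiv ℂ k h = 0 := by
      apply Polynomial.ext; intro d
      rw [Polynomial.coeff_zero]
      exact ih _ (Fin.tail z) (fun v' => key v' d)
    have := congrArg (MvPolynomial.finSuccEquiv ℂ k).symm hfs
    simpa using this

set_option synthInstance.maxHeartbeats 1000000 in
set_option maxHeartbeats 1000000 in
lemma tau_fixed_is_const (m : ℕ) (a : Kfield m) (ha : ∀ j, tau m j a = a) :
    ∃ c : ℂ, a = algebraMap (MvPolynomial (Fin m) ℂ) (Kfield m) (MvPolynomial.C c) := by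
  obtain ⟨p, q, hqmem, rfl⟩ := IsFractionRing.div_surjective (A := MvPolynomial (Fin m) ℂ) a
  set ι := algebraMap (MvPolynomial (Fin m) ℂ) (Kfield m) with hι
  have hιinj : Function.Injective ι := IsFractionRing.injective _ _
  have hq : q ≠ 0 := nonZeroDivisors.ne_zero hqmem
  -- one-step relation
  have hstep : ∀ j : Fin m, shiftPolyEquiv m (Pi.single j 1) p * q
      = p * shiftPolyEquiv m (Pi.single j 1) q := by
    intro j
    have h1 := ha j
    rw [map_div₀, tau_algebraMap, tau_algebraMap] at h1
    have hq' : shiftPolyEquiv m (Pi.single j 1) q ≠ 0 := by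
      intro h0
      exact hq ((shiftPolyEquiv m (Pi.single j 1)).injective (by simpa using h0))
    have hqK : ι q ≠ 0 := fun h0 => hq (hιinj (by simpa using h0))
    have hqK' : ι (shiftPolyEquiv m (Pi.single j 1) q) ≠ 0 :=
      fun h0 => hq' (hιinj (by simpa using h0))
    rw [div_eq_div_iff hqK' hqK] at h1
    apply hιinj
    rw [map_mul, map_mul]
    exact h1
  -- iterated relation
  have hiter : ∀ (v : Fin m → ℕ),
      shiftPolyEquiv m (fun j => (v j : ℂ)) p * q
        = p * shiftPolyEquiv m (fun j => (v j : ℂ)) q := by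
    have main : ∀ (n : ℕ) (v : Fin m → ℕ), (∑ j, v j) = n →
        shiftPolyEquiv m (fun j => (v j : ℂ)) p * q
          = p * shiftPolyEquiv m (fun j => (v j : ℂ)) q := by
      intro n
      induction n with
      | zero =>
        intro v hv
        have hv0 : ∀ j, v j = 0 := by
          intro j
          exact Finset.sum_eq_zero_iff.mp hv j (Finset.mem_univ j)
        have : (fun j => ((v j : ℕ) : ℂ)) = (0 : Fin m → ℂ) := by
          funext j; simp [hv0 j]
        rw [this, shiftPolyEquiv_zero, shiftPolyEquiv_zero]
      | succ n ihn =>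
        intro v hv
        have hex : ∃ j, v j ≠ 0 := by
          by_contra hco
          push_neg at hco
          simp [hco] at hv
        obtain ⟨j, hj⟩ := hex
        set w : Fin m → ℕ := Function.update v j (v j - 1) with hw
        have hvw : ∀ k, v k = w k + (Pi.single j 1 : Fin m → ℕ) k := by
          intro k
          by_cases hk : k = j
          · subst hk
            rw [hw]
            simp only [Function.update_self, Pi.single_eq_same]
            omega
          · simp [hw, Function.update_of_ne hk, Pi.single_eq_of_ne hk]
        have hwsum : (∑ k, w k) = n := by
          have : (∑ k, v k) = (∑ k, w k) + 1 := by
            rw [Finset.sum_congr rfl (fun k _ => hvw k), Finset.sum_add_distrib]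
            congr 1
            simp
          omega
        have hP : shiftPolyEquiv m (fun k => (w k : ℂ)) p * q
            = p * shiftPolyEquiv m (fun k => (w k : ℂ)) q := ihn w hwsum
        -- apply shift_j to hP
        have hP2 := congrArg (shiftPolyEquiv m (Pi.single j 1)) hP
        rw [map_mul, map_mul, shiftPolyEquiv_comp, shiftPolyEquiv_comp] at hP2
        have hcast : (Pi.single j 1 + fun k => ((w k : ℕ) : ℂ)) = fun k => ((v k : ℂ)) := by
          funext k
          by_cases hk : k = j
          · subst hk; simp [hvw k, Pi.single_eq_same]; ring
          · simp [Pi.single_eq_of_ne hk, hvw k]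
        rw [hcast] at hP2
        -- hP2 : shift_v p * shift_j q = shift_j p * shift_v q
        have hbase := hstep j
        have hq' : shiftPolyEquiv m (Pi.single j 1) q ≠ 0 := by
          intro h0
          exact hq ((shiftPolyEquiv m (Pi.single j 1)).injective (by simpa using h0))
        apply mul_right_cancel₀ hq'
        calc shiftPolyEquiv m (fun k => (v k : ℂ)) p * q * shiftPolyEquiv m (Pi.single j 1) q
            = (shiftPolyEquiv m (fun k => (v k : ℂ)) p * shiftPolyEquiv m (Pi.single j 1) q) * q := by
              ring
          _ = (shiftPolyEquiv m (Pi.single j 1) p * shiftPolyEquiv m (fun k => (v k : ℂ)) q) * q := by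
              rw [hP2]
          _ = (shiftPolyEquiv m (Pi.single j 1) p * q) * shiftPolyEquiv m (fun k => (v k : ℂ)) q := by
              ring
          _ = (p * shiftPolyEquiv m (Pi.single j 1) q) * shiftPolyEquiv m (fun k => (v k : ℂ)) q := by
              rw [hbase]
          _ = p * shiftPolyEquiv m (fun k => (v k : ℂ)) q * shiftPolyEquiv m (Pi.single j 1) q := by
              ring
    exact fun v => main (∑ j, v j) v rfl
  -- pick a point where q does not vanish
  have hzex : ∃ z : Fin m → ℂ, MvPolynomial.eval z q ≠ 0 := by
    by_contra hco
    push_neg at hco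
    apply hq
    apply MvPolynomial.funext
    intro x
    simp [hco x]
  obtain ⟨z, hz⟩ := hzex
  have hgrid : (MvPolynomial.C (MvPolynomial.eval z q) * p
      - MvPolynomial.C (MvPolynomial.eval z p) * q : MvPolynomial (Fin m) ℂ) = 0 := by
    apply grid_vanish m _ z
    intro v
    have h1 := congrArg (MvPolynomial.eval z) (hiter v)
    rw [map_mul, map_mul, eval_shiftPolyEquiv, eval_shiftPolyEquiv] at h1
    simp only [map_sub, map_mul, MvPolynomial.eval_C]
    linear_combination h1
  have hpq : MvPolynomial.C (MvPolynomial.eval z q) * p = MvPolynomial.C (MvPolynomial.eval z p) * q := by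
    have := sub_eq_zero.mp hgrid
    exact this
  refine ⟨(MvPolynomial.eval z p) / (MvPolynomial.eval z q), ?_⟩
  have hιq : ι q ≠ 0 := fun h0 => hq (hιinj (by simpa using h0))
  have hιeq : ι (MvPolynomial.C (MvPolynomial.eval z q)) ≠ 0 := by
    intro h0
    have : (MvPolynomial.C (MvPolynomial.eval z q) : MvPolynomial (Fin m) ℂ) = 0 := hιinj (by simpa using h0)
    rw [MvPolynomial.C_eq_zero] at this
    exact hz this
  rw [div_eq_iff hιq]
  have h2 := congrArg ι hpq
  rw [map_mul, map_mul] at h2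
  -- ι (C (MvPolynomial.eval z q)) * ι p = ι (C (MvPolynomial.eval z p)) * ι q
  have hc : MvPolynomial.C ((MvPolynomial.eval z p) / (MvPolynomial.eval z q)) * MvPolynomial.C (MvPolynomial.eval z q)
      = (MvPolynomial.C (MvPolynomial.eval z p) : MvPolynomial (Fin m) ℂ) := by
    rw [← map_mul]
    congr 1
    field_simp
  refine mul_left_cancel₀ hιeq ?_
  calc ι (MvPolynomial.C (MvPolynomial.eval z q)) * ι p
      = ι (MvPolynomial.C (MvPolynomial.eval z p)) * ι q := h2
    _ = ι (MvPolynomial.C ((MvPolynomial.eval z p) / (MvPolynomial.eval z q)) * MvPolynomial.C (MvPolynomial.eval z q)) * ι q := by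
        rw [hc]
    _ = ι (MvPolynomial.C (MvPolynomial.eval z q)) * (ι (MvPolynomial.C ((MvPolynomial.eval z p) / (MvPolynomial.eval z q))) * ι q) := by
        rw [map_mul]; ring

lemma charpoly_conj {n : ℕ} {R : Type*} [CommRing R] (A P Q : Matrix (Fin n) (Fin n) R)
    (hPQ : P * Q = 1) (hQP : Q * P = 1) :
    (Q * A * P).charpoly = A.charpoly := by
  have hmapQP : Q.map Polynomial.C * P.map Polynomial.C = 1 := by
    have := congrArg (RingHom.mapMatrix (Polynomial.C : R →+* Polynomial R)) hQP
    rw [map_mul, map_one] at this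
    simpa [RingHom.mapMatrix_apply] using this
  have hc : Matrix.charmatrix (Q * A * P)
      = Q.map Polynomial.C * Matrix.charmatrix A * P.map Polynomial.C := by
    rw [Matrix.charmatrix, Matrix.charmatrix]
    rw [Matrix.mul_sub, Matrix.sub_mul]
    congr 1
    · calc Matrix.scalar (Fin n) (Polynomial.X : Polynomial R)
          = Q.map Polynomial.C * P.map Polynomial.C * Matrix.scalar (Fin n) Polynomial.X := by
            rw [hmapQP, one_mul]
        _ = Q.map Polynomial.C * (P.map Polynomial.C * Matrix.scalar (Fin n) Polynomial.X) := by
            rw [Matrix.mul_assoc]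
        _ = Q.map Polynomial.C * (Matrix.scalar (Fin n) Polynomial.X * P.map Polynomial.C) := by
            rw [(Matrix.scalar_commute (Polynomial.X : Polynomial R)
              (fun r' => Commute.all _ _) (P.map Polynomial.C)).eq]
        _ = Q.map Polynomial.C * Matrix.scalar (Fin n) Polynomial.X * P.map Polynomial.C := by
            rw [Matrix.mul_assoc]
    · simp only [map_mul, RingHom.mapMatrix_apply]
  rw [Matrix.charpoly, Matrix.charpoly, hc, Matrix.det_mul, Matrix.det_mul]
  have h1 : (Q.map Polynomial.C).det * (P.map Polynomial.C).det = 1 := by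
    rw [← Matrix.det_mul, hmapQP, Matrix.det_one]
  rw [mul_right_comm, h1, one_mul]

set_option maxHeartbeats 1000000 in
set_option synthInstance.maxHeartbeats 1000000 in
theorem stmt3 (m : ℕ) (N : Type) [AddCommGroup N] [Module (Kfield m) N]
    [FiniteDimensional (Kfield m) N]
    (S T : Fin m → N → N)
    (hinv : ∀ j, Function.LeftInverse (T j) (S j) ∧ Function.RightInverse (T j) (S j))
    (hadd : ∀ j u v, S j (u + v) = S j u + S j v)
    (hsmul : ∀ j (a : Kfield m) v, S j (a • v) = (tau m j a) • S j v)
    (hcomm : ∀ j j' v, S j (S j' v) = S j' (S j v))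
    (hnz : Nontrivial N)
    (hsimple : ∀ W : Submodule (Kfield m) N,
      (∀ j, ∀ v ∈ W, S j v ∈ W) → (∀ j, ∀ v ∈ W, T j v ∈ W) → W = ⊥ ∨ W = ⊤)
    (φ : N →ₗ[Kfield m] N) (hφ : ∀ j v, φ (S j v) = S j (φ v)) :
    ∃ c : ℂ, ∀ v : N,
      φ v = algebraMap (MvPolynomial (Fin m) ℂ) (Kfield m) (MvPolynomial.C c) • v := by
  classical
  have hSinj : ∀ j, Function.Injective (S j) := fun j => (hinv j).1.injective
  have hST : ∀ j v, S j (T j v) = v := fun j => (hinv j).2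
  have hTS : ∀ j v, T j (S j v) = v := fun j => (hinv j).1
  have hT_add : ∀ j, ∀ u v, T j (u + v) = T j u + T j v := by
    intro j u v
    apply hSinj j
    rw [hadd, hST, hST, hST]
  have hT_smul : ∀ j, ∀ (a : Kfield m) v, T j (a • v) = (tau m j).symm a • T j v := by
    intro j a v
    apply hSinj j
    rw [hST, hsmul, RingEquiv.apply_symm_apply, hST]
  have hφT : ∀ j v, φ (T j v) = T j (φ v) := by
    intro j v
    apply hSinj j
    rw [← hφ, hST, hST]
  -- basis and matrices
  set n := Module.finrank (Kfield m) N with hn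
  let b : Module.Basis (Fin n) (Kfield m) N := Module.finBasis (Kfield m) N
  set A : Matrix (Fin n) (Fin n) (Kfield m) := LinearMap.toMatrix b b φ with hA
  -- generic coordinates of a semilinear map
  have repr_semi : ∀ (U : N → N) (ρ : Kfield m ≃+* Kfield m),
      (∀ u v, U (u + v) = U u + U v) → (∀ (a : Kfield m) v, U (a • v) = ρ a • U v) →
      ∀ (v : N) (k : Fin n),
        b.repr (U v) k = ∑ i, b.repr (U (b i)) k * ρ (b.repr v i) := by
    intro U ρ hUadd hUsmul v k
    have h1 : U (∑ i, b.repr v i • b i) = ∑ i, ρ (b.repr v i) • U (b i) := by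
      rw [show U = ⇑(AddMonoidHom.mk' U (fun u v => hUadd u v)) from rfl, map_sum]
      exact Finset.sum_congr rfl (fun i _ => hUsmul _ _)
    have h2 : U v = ∑ i, ρ (b.repr v i) • U (b i) := by
      conv_lhs => rw [← b.sum_repr v]
      exact h1
    rw [h2, map_sum]
    rw [Finsupp.finset_sum_apply]
    refine Finset.sum_congr rfl (fun i _ => ?_)
    rw [map_smul, Finsupp.smul_apply, smul_eq_mul, mul_comm]
  set P : Fin m → Matrix (Fin n) (Fin n) (Kfield m) :=
    fun j => Matrix.of fun k i => b.repr (S j (b i)) k with hP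
  set Q : Fin m → Matrix (Fin n) (Fin n) (Kfield m) :=
    fun j => Matrix.of fun k i => b.repr (T j (b i)) k with hQ
  have hAP : ∀ j, A * P j = P j * A.map ⇑(tau m j) := by
    intro j
    ext k i
    rw [Matrix.mul_apply, Matrix.mul_apply]
    have hL : ∑ l, A k l * P j l i = b.repr (φ (S j (b i))) k := by
      have hmv := congrFun (LinearMap.toMatrix_mulVec_repr b b φ (S j (b i))) k
      rw [← hmv]
      simp [Matrix.mulVec, dotProduct, hA, hP]
    have hR : ∑ l, P j k l * A.map (⇑(tau m j)) l i = b.repr (S j (φ (b i))) k := by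
      rw [repr_semi (S j) (tau m j) (hadd j) (hsmul j) (φ (b i)) k]
      refine Finset.sum_congr rfl (fun l _ => ?_)
      simp [Matrix.map_apply, hA, hP, LinearMap.toMatrix_apply]
    rw [hL, hR, hφ]
  have hPQ1 : ∀ j, P j * (Q j).map ⇑(tau m j) = 1 := by
    intro j
    ext k i
    rw [Matrix.mul_apply, Matrix.one_apply]
    have h1 : ∑ l, P j k l * ((Q j).map ⇑(tau m j)) l i = b.repr (S j (T j (b i))) k := by
      rw [repr_semi (S j) (tau m j) (hadd j) (hsmul j) (T j (b i)) k]
      refine Finset.sum_congr rfl (fun l _ => ?_)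
      simp [Matrix.map_apply, hP, hQ]
    rw [h1, hST, b.repr_self, Finsupp.single_apply]
    simp [eq_comm]
  have hQP1 : ∀ j, Q j * (P j).map ⇑(tau m j).symm = 1 := by
    intro j
    ext k i
    rw [Matrix.mul_apply, Matrix.one_apply]
    have h1 : ∑ l, Q j k l * ((P j).map ⇑(tau m j).symm) l i
        = b.repr (T j (S j (b i))) k := by
      rw [repr_semi (T j) (tau m j).symm (hT_add j) (hT_smul j) (S j (b i)) k]
      refine Finset.sum_congr rfl (fun l _ => ?_)
      simp [Matrix.map_apply, hP, hQ]
    rw [h1, hTS, b.repr_self, Finsupp.single_apply]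
    simp [eq_comm]
  have hQτP : ∀ j, (Q j).map ⇑(tau m j) * P j = 1 := by
    intro j
    have h := congrArg (RingHom.mapMatrix ((tau m j : Kfield m ≃+* Kfield m) : Kfield m →+* Kfield m)) (hQP1 j)
    rw [map_mul, map_one] at h
    simp only [RingHom.mapMatrix_apply, RingEquiv.coe_toRingHom] at h
    rw [Matrix.map_map] at h
    have hid : (⇑(tau m j) ∘ ⇑(tau m j).symm) = id := by
      funext x; simp
    rw [hid, Matrix.map_id] at h
    exact h
  have hconj : ∀ j, A.charpoly.map ((tau m j : Kfield m ≃+* Kfield m) : Kfield m →+* Kfield m)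
      = A.charpoly := by
    intro j
    have h1 : (Q j).map ⇑(tau m j) * A * P j = A.map ⇑(tau m j) := by
      calc (Q j).map ⇑(tau m j) * A * P j
          = (Q j).map ⇑(tau m j) * (A * P j) := by rw [Matrix.mul_assoc]
        _ = (Q j).map ⇑(tau m j) * (P j * A.map ⇑(tau m j)) := by rw [hAP j]
        _ = ((Q j).map ⇑(tau m j) * P j) * A.map ⇑(tau m j) := by rw [Matrix.mul_assoc]
        _ = A.map ⇑(tau m j) := by rw [hQτP j, one_mul]
    have h2 : (A.map ⇑(tau m j)).charpoly = A.charpoly := by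
      rw [← h1]
      exact charpoly_conj A (P j) ((Q j).map ⇑(tau m j)) (hPQ1 j) (hQτP j)
    have h3 := Matrix.charpoly_map A ((tau m j : Kfield m ≃+* Kfield m) : Kfield m →+* Kfield m)
    rw [← h3]
    convert h2 using 2
    rfl
  have hfix : ∀ (d : ℕ) (j : Fin m), tau m j (A.charpoly.coeff d) = A.charpoly.coeff d := by
    intro d j
    have := congrArg (fun r => Polynomial.coeff r d) (hconj j)
    simpa [Polynomial.coeff_map] using this
  -- the coefficients are constants
  set g : ℂ →+* Kfield m :=
    (algebraMap (MvPolynomial (Fin m) ℂ) (Kfield m)).comp (MvPolynomial.C) with hg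
  have hlift : A.charpoly ∈ Polynomial.lifts g := by
    rw [Polynomial.lifts_iff_coeff_lifts]
    intro d
    obtain ⟨c, hc⟩ := tau_fixed_is_const m (A.charpoly.coeff d) (fun j => hfix d j)
    exact ⟨c, hc.symm⟩
  obtain ⟨qpol, hqpol⟩ := (Polynomial.mem_lifts _).mp hlift
  have ginj : Function.Injective g := g.injective
  have qmonic : qpol.Monic := by
    apply Polynomial.monic_of_injective ginj
    rw [hqpol]
    exact A.charpoly_monic
  -- factorization over ℂ
  have hsplits : qpol = (qpol.roots.map fun c : ℂ => Polynomial.X - Polynomial.C c).prod :=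
    Polynomial.Splits.eq_prod_roots_of_monic (IsAlgClosed.splits qpol) qmonic
  have hfacK : A.charpoly
      = (qpol.roots.map fun c => Polynomial.X - Polynomial.C (g c)).prod := by
    rw [← hqpol]
    conv_lhs => rw [hsplits]
    have hmp : Polynomial.map g ((qpol.roots.map fun c : ℂ => Polynomial.X - Polynomial.C c).prod)
        = ((qpol.roots.map fun c : ℂ => Polynomial.X - Polynomial.C c).map (Polynomial.map g)).prod := by
      rw [← Polynomial.coe_mapRingHom]
      exact map_multiset_prod (Polynomial.mapRingHom g) _
    rw [hmp, Multiset.map_map]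
    congr 1
    apply Multiset.map_congr rfl
    intro c _
    simp [Polynomial.map_sub]
  -- Cayley-Hamilton
  have hCH : Polynomial.aeval φ A.charpoly = 0 := by
    rw [LinearMap.charpoly_toMatrix φ b]
    exact LinearMap.aeval_self_charpoly φ
  let l : List ℂ := qpol.roots.toList
  have hlcoe : (↑l : Multiset ℂ) = qpol.roots := qpol.roots.coe_toList
  have hfacK' : A.charpoly = ((l.map fun c => Polynomial.X - Polynomial.C (g c)).prod) := by
    rw [hfacK, ← hlcoe, Multiset.map_coe, Multiset.prod_coe]
  have h0 : ((l.map fun c =>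
      φ - g c • (LinearMap.id : N →ₗ[Kfield m] N)).prod : Module.End (Kfield m) N) = 0 := by
    rw [hfacK'] at hCH
    rw [map_list_prod (Polynomial.aeval φ), List.map_map] at hCH
    rw [← hCH]
    congr 1
    have hcf : ((Polynomial.aeval φ) ∘ fun c : ℂ => Polynomial.X - Polynomial.C (g c))
        = fun c : ℂ => φ - g c • (LinearMap.id : N →ₗ[Kfield m] N) := by
      funext c
      have hms := map_sub (Polynomial.aeval (R := Kfield m) (A := Module.End (Kfield m) N) φ)
        (Polynomial.X) (Polynomial.C (g c))
      rw [Function.comp_apply, hms, Polynomial.aeval_X, Polynomial.aeval_C,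
        Module.algebraMap_end_eq_smul_id]
    rw [hcf]
  -- some factor is not injective
  have hinjprod : ∀ (s : List (Module.End (Kfield m) N)),
      (∀ f ∈ s, Function.Injective f) → Function.Injective ⇑(s.prod) := by
    intro s
    induction s with
    | nil =>
      intro _
      rw [List.prod_nil]
      intro x y hxy
      simpa using hxy
    | cons f s ihs =>
      intro hall
      rw [List.prod_cons]
      have h1 : Function.Injective f := hall f List.mem_cons_self
      have h2 := ihs (fun u hu => hall u (List.mem_cons_of_mem _ hu))
      intro x y hxy
      apply h2
      apply h1
      simpa [Module.End.mul_apply] using hxy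
  have hex : ∃ c ∈ l,
      ¬ Function.Injective (φ - g c • (LinearMap.id : N →ₗ[Kfield m] N)) := by
    by_contra hco
    push_neg at hco
    have hinj : Function.Injective
        ⇑((l.map fun c => φ - g c • (LinearMap.id : N →ₗ[Kfield m] N)).prod) := by
      apply hinjprod
      intro f hf
      obtain ⟨c, hc, rfl⟩ := List.mem_map.mp hf
      exact hco c hc
    rw [h0] at hinj
    obtain ⟨x, y, hxy⟩ := exists_pair_ne N
    exact hxy (hinj (by simp))
  obtain ⟨c, hcroot, hni⟩ := hex
  set W := LinearMap.ker (φ - g c • (LinearMap.id : N →ₗ[Kfield m] N)) with hW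
  have hWmem : ∀ v, v ∈ W ↔ φ v = g c • v := by
    intro v
    rw [hW, LinearMap.mem_ker]
    simp [sub_eq_zero]
  have hWne : W ≠ ⊥ := by
    intro h
    exact hni (LinearMap.ker_eq_bot.mp h)
  have hτc : ∀ j, tau m j (g c) = g c := fun j => tau_C m j c
  have hτc' : ∀ j, (tau m j).symm (g c) = g c := by
    intro j
    conv_lhs => rw [← hτc j]
    rw [RingEquiv.symm_apply_apply]
  have hWS : ∀ j, ∀ v ∈ W, S j v ∈ W := by
    intro j v hv
    rw [hWmem] at hv ⊢
    rw [hφ j v, hv, hsmul j, hτc j]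
  have hWT : ∀ j, ∀ v ∈ W, T j v ∈ W := by
    intro j v hv
    rw [hWmem] at hv ⊢
    rw [hφT j v, hv, hT_smul j, hτc' j]
  rcases hsimple W hWS hWT with h | h
  · exact absurd h hWne
  · refine ⟨c, fun v => ?_⟩
    have hv : v ∈ W := by rw [h]; exact Submodule.mem_top
    exact (hWmem v).mp hv

end
end

section
/- The reduction-modulo-δ map O(X_{K[[δ]]}) → O(X_K) (setting δ = 0 in all coefficients) induces a K-linear isomorphism O(X_{K[[δ]]}) / (V_{K[[δ]]} + δ·O(X_{K[[δ]]})) ≅ O(X_K)/I_K. In other words, the limit lim_{δ→0} Hⁿ(X_δ, ω_δ) of the top twisted de Rham cohomology is the likelihood quotient O(X_K)/I_K. -/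
set_option maxHeartbeats 1000000
set_option synthInstance.maxHeartbeats 400000

noncomputable section

open MvPolynomial

/-- The polynomial ring ℂ[s₁,…,s_ℓ,ν₁,…,νₙ]. -/
abbrev PRing (l n : ℕ) : Type := MvPolynomial (Fin l ⊕ Fin n) ℂ

/-- The rational function field K = ℂ(s₁,…,s_ℓ,ν₁,…,νₙ). -/
abbrev KK (l n : ℕ) : Type := FractionRing (PRing l n)

/-- The generator s_i of K. -/
def sGen (l n : ℕ) (i : Fin l) : KK l n :=
  algebraMap (PRing l n) (KK l n) (X (Sum.inl i))

/-- The generator ν_j of K. -/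
def nuGen (l n : ℕ) (j : Fin n) : KK l n :=
  algebraMap (PRing l n) (KK l n) (X (Sum.inr j))

/-- The Laurent polynomial ring A[x₁^{±1},…,xₙ^{±1}]. -/
abbrev Laur (n : ℕ) (A : Type) [CommRing A] : Type :=
  AddMonoidAlgebra A (Fin n → ℤ)

/-- The Laurent monomial x^b. -/
def lmono {n : ℕ} {A : Type} [CommRing A] (b : Fin n → ℤ) : Laur n A :=
  AddMonoidAlgebra.single b 1

/-- The partial derivative ∂/∂x_j of a Laurent polynomial. -/
def lpderiv {n : ℕ} {A : Type} [CommRing A] (j : Fin n) (f : Laur n A) : Laur n A :=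
  Finsupp.sum f.coeff fun m c => AddMonoidAlgebra.single (m - Pi.single j 1) ((m j : A) * c)

/-- Coefficientwise map of Laurent polynomial rings along a ring homomorphism. -/
def laurMap {n : ℕ} {A B : Type} [CommRing A] [CommRing B] (φ : A →+* B) :
    Laur n A →+* Laur n B where
  toFun g := AddMonoidAlgebra.ofCoeff (Finsupp.mapRange φ φ.map_zero g.coeff)
  map_one' := (AddMonoidAlgebra.mapRingHom (Fin n → ℤ) φ).map_one'
  map_mul' := (AddMonoidAlgebra.mapRingHom (Fin n → ℤ) φ).map_mul'
  map_zero' := (AddMonoidAlgebra.mapRingHom (Fin n → ℤ) φ).map_zero'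
  map_add' := (AddMonoidAlgebra.mapRingHom (Fin n → ℤ) φ).map_add'

end

noncomputable section
/-- The inclusion ℂ → K. -/
def cC (l n : ℕ) : ℂ →+* KK l n := (algebraMap (PRing l n) (KK l n)).comp MvPolynomial.C

/-- The coefficient map ℂ → A obtained from κ : K → A. -/
def cmap {l n : ℕ} {A : Type} [CommRing A] (κ : KK l n →+* A) : ℂ →+* A :=
  κ.comp (cC l n)

/-- The image of the Laurent polynomial f_i in A[x^{±1}]. -/
def fImg {l n : ℕ} (f : Fin l → Laur n ℂ) {A : Type} [CommRing A] (κ : KK l n →+* A)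
    (i : Fin l) : Laur n A := laurMap (cmap κ) (f i)

/-- The product f₁ ⋯ f_ℓ in A[x^{±1}]. -/
def FProd {l n : ℕ} (f : Fin l → Laur n ℂ) {A : Type} [CommRing A] (κ : KK l n →+* A) :
    Laur n A := ∏ i, fImg f κ i

/-- O(X_A) = A[x₁^{±1},…,xₙ^{±1}] localized at f₁⋯f_ℓ. -/
abbrev OX {l n : ℕ} (f : Fin l → Laur n ℂ) {A : Type} [CommRing A] (κ : KK l n →+* A) :
    Type := Localization.Away (FProd f κ)

end

noncomputable section

/-- x_j as a unit of O(X_A). -/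
def xU {l n : ℕ} (f : Fin l → Laur n ℂ) {A : Type} [CommRing A] (κ : KK l n →+* A)
    (j : Fin n) : (OX f κ)ˣ where
  val := algebraMap (Laur n A) (OX f κ) (lmono (Pi.single j 1))
  inv := algebraMap (Laur n A) (OX f κ) (lmono (-Pi.single j 1))
  val_inv := by
    rw [← map_mul]
    simp only [lmono, AddMonoidAlgebra.single_mul_single, add_neg_cancel, one_mul]
    rw [← AddMonoidAlgebra.one_def, map_one]
  inv_val := by
    rw [← map_mul]
    simp only [lmono, AddMonoidAlgebra.single_mul_single, neg_add_cancel, one_mul]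
    rw [← AddMonoidAlgebra.one_def, map_one]

lemma fImg_isUnit {l n : ℕ} (f : Fin l → Laur n ℂ) {A : Type} [CommRing A]
    (κ : KK l n →+* A) (i : Fin l) :
    IsUnit (algebraMap (Laur n A) (OX f κ) (fImg f κ i)) := by
  have h : fImg f κ i ∣ FProd f κ := Finset.dvd_prod_of_mem _ (Finset.mem_univ i)
  exact IsLocalization.Away.isUnit_of_dvd (x := FProd f κ) (S := OX f κ) h

/-- f_i as a unit of O(X_A). -/
def fU {l n : ℕ} (f : Fin l → Laur n ℂ) {A : Type} [CommRing A] (κ : KK l n →+* A)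
    (i : Fin l) : (OX f κ)ˣ := (fImg_isUnit f κ i).unit

/-- f^a = f₁^{a₁} ⋯ f_ℓ^{a_ℓ} for an integer vector a. -/
def fpow {l n : ℕ} (f : Fin l → Laur n ℂ) {A : Type} [CommRing A] (κ : KK l n →+* A)
    (a : Fin l → ℤ) : OX f κ := ↑(∏ i, (fU f κ i) ^ (a i))

end

noncomputable section
/-- The element
v_{a,b,j} = x₁⋯xₙ · f^a · x^b · ((ν_j + δ b_j) x_j^{-1} - Σ_i (s_i - δ a_i) f_i^{-1} ∂f_i/∂x_j)
of O(X_A). -/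
def vElt {l n : ℕ} (f : Fin l → Laur n ℂ) {A : Type} [CommRing A] (κ : KK l n →+* A)
    (δ : A) (a : Fin l → ℤ) (b : Fin n → ℤ) (j : Fin n) : OX f κ :=
  algebraMap (Laur n A) (OX f κ) (lmono fun _ => 1) * fpow f κ a *
    algebraMap (Laur n A) (OX f κ) (lmono b) *
    (algebraMap A (OX f κ) (κ (nuGen l n j) + δ * (b j : A)) * ↑(xU f κ j)⁻¹ -
      ∑ i : Fin l, algebraMap A (OX f κ) (κ (sGen l n i) - δ * (a i : A)) *
        (↑(fU f κ i)⁻¹ * algebraMap (Laur n A) (OX f κ) (lpderiv j (fImg f κ i))))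

/-- The A-submodule V_A ⊆ O(X_A) spanned by the elements v_{a,b,j}. -/
def VA {l n : ℕ} (f : Fin l → Laur n ℂ) {A : Type} [CommRing A] (κ : KK l n →+* A)
    (δ : A) : Submodule A (OX f κ) :=
  Submodule.span A {g | ∃ a b j, g = vElt f κ δ a b j}

/-- The generator w_j = ν_j x_j^{-1} - Σ_i s_i f_i^{-1} ∂f_i/∂x_j of the
likelihood ideal, in O(X_K). -/
def wElt {l n : ℕ} (f : Fin l → Laur n ℂ) (j : Fin n) :
    OX f (RingHom.id (KK l n)) :=
  algebraMap (KK l n) (OX f (RingHom.id (KK l n))) (nuGen l n j) *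
      ↑(xU f (RingHom.id (KK l n)) j)⁻¹ -
    ∑ i : Fin l, algebraMap (KK l n) (OX f (RingHom.id (KK l n))) (sGen l n i) *
      (↑(fU f (RingHom.id (KK l n)) i)⁻¹ *
        algebraMap (Laur n (KK l n)) (OX f (RingHom.id (KK l n)))
          (lpderiv j (fImg f (RingHom.id (KK l n)) i)))

/-- The likelihood ideal I_K ⊆ O(X_K). -/
def likeIdeal {l n : ℕ} (f : Fin l → Laur n ℂ) : Ideal (OX f (RingHom.id (KK l n))) :=
  Ideal.span {g | ∃ j, g = wElt f j}
end

noncomputable section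
/-- The generators (s₁,…,s_ℓ,ν₁,…,νₙ) of K. -/
def genK (l n : ℕ) : (Fin l ⊕ Fin n) → KK l n := Sum.elim (sGen l n) (nuGen l n)

lemma laurMap_comp_apply {n : ℕ} {A B C : Type} [CommRing A] [CommRing B] [CommRing C]
    (θ : B →+* C) (φ : A →+* B) (g : Laur n A) :
    laurMap θ (laurMap φ g) = laurMap (θ.comp φ) g := by
  show AddMonoidAlgebra.ofCoeff (Finsupp.mapRange θ θ.map_zero (Finsupp.mapRange φ φ.map_zero g.coeff)) = _
  rw [← Finsupp.mapRange_comp (h := by simp)]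
  rfl

lemma laurMap_FProd {l n : ℕ} (f : Fin l → Laur n ℂ) {A B : Type} [CommRing A] [CommRing B]
    (κ₁ : KK l n →+* A) (κ₂ : KK l n →+* B) (θ : A →+* B)
    (hθ : θ.comp (cmap κ₁) = cmap κ₂) :
    laurMap θ (FProd f κ₁) = FProd f κ₂ := by
  rw [FProd, map_prod]
  refine Finset.prod_congr rfl fun i _ => ?_
  show laurMap θ (laurMap (cmap κ₁) (f i)) = laurMap (cmap κ₂) (f i)
  rw [laurMap_comp_apply, hθ]

/-- The coefficientwise ring homomorphism O(X_A) → O(X_B) induced by a ring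
homomorphism θ : A → B compatible with the coefficient maps. -/
def OXmap {l n : ℕ} (f : Fin l → Laur n ℂ) {A B : Type} [CommRing A] [CommRing B]
    (κ₁ : KK l n →+* A) (κ₂ : KK l n →+* B) (θ : A →+* B)
    (hθ : θ.comp (cmap κ₁) = cmap κ₂) : OX f κ₁ →+* OX f κ₂ :=
  Localization.awayLift ((algebraMap (Laur n B) (OX f κ₂)).comp (laurMap θ)) (FProd f κ₁)
    (by
      rw [RingHom.comp_apply, laurMap_FProd f κ₁ κ₂ θ hθ]
      exact IsLocalization.Away.algebraMap_isUnit _)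
end

noncomputable section

/-- O(X_K), the case A = K, δ = 1. -/
abbrev OXK {l n : ℕ} (f : Fin l → Laur n ℂ) : Type := OX f (RingHom.id (KK l n))

/-- The formal power series ring K[[δ]]. -/
abbrev PS (l n : ℕ) : Type := PowerSeries (KK l n)

/-- O(X_{K[[δ]]}). -/
abbrev OXd {l n : ℕ} (f : Fin l → Laur n ℂ) : Type := OX f (PowerSeries.C (R := KK l n))

/-- V_{K[[δ]]} ⊆ O(X_{K[[δ]]}), with δ the power series variable. -/
def Vd {l n : ℕ} (f : Fin l → Laur n ℂ) : Submodule (PS l n) (OXd f) :=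
  VA f (PowerSeries.C (R := KK l n)) PowerSeries.X

lemma redCompat (l n : ℕ) :
    (PowerSeries.constantCoeff (R := KK l n)).comp (cmap (PowerSeries.C (R := KK l n))) =
      cmap (RingHom.id (KK l n)) :=
  RingHom.ext fun c => by simp [cmap, cC]

/-- The reduction map O(X_{K[[δ]]}) → O(X_K) setting δ = 0 in all coefficients. -/
def red {l n : ℕ} (f : Fin l → Laur n ℂ) : OXd f →+* OXK f :=
  OXmap f (PowerSeries.C (R := KK l n)) (RingHom.id (KK l n))
    (PowerSeries.constantCoeff (R := KK l n)) (redCompat l n)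

/-- The submodule δ·O(X_{K[[δ]]}). -/
def deltaMod {l n : ℕ} (f : Fin l → Laur n ℂ) : Submodule (PS l n) (OXd f) :=
  Submodule.span (PS l n)
    {g | ∃ h, g = algebraMap (PS l n) (OXd f) PowerSeries.X * h}

namespace Stmt5Aux

open PowerSeries

variable {l n : ℕ}

/-! ### Basic lemmas about `laurMap`, `lmono`, `lpderiv` -/

lemma laurMap_apply_single {A B : Type} [CommRing A] [CommRing B] (φ : A →+* B)
    (m : Fin n → ℤ) (c : A) :
    laurMap (n := n) φ (AddMonoidAlgebra.single m c) = AddMonoidAlgebra.single m (φ c) :=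
  congrArg AddMonoidAlgebra.ofCoeff (Finsupp.mapRange_single (hf := φ.map_zero))

lemma laurMap_lmono {A B : Type} [CommRing A] [CommRing B] (φ : A →+* B) (b : Fin n → ℤ) :
    laurMap (n := n) φ (lmono b) = lmono b := by
  rw [lmono, laurMap_apply_single, map_one, lmono]

lemma laurMap_coeff {A B : Type} [CommRing A] [CommRing B] (φ : A →+* B)
    (g : Laur n A) (m : Fin n → ℤ) : (laurMap φ g).coeff m = φ (g.coeff m) :=
  Finsupp.mapRange_apply (hf := φ.map_zero)

lemma laurMap_injective {A B : Type} [CommRing A] [CommRing B] (φ : A →+* B)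
    (hφ : Function.Injective φ) : Function.Injective (laurMap (n := n) φ) :=
  fun a b h => AddMonoidAlgebra.coeff_injective
    (Finsupp.mapRange_injective φ φ.map_zero hφ (congrArg AddMonoidAlgebra.coeff h))

lemma laurMap_id {A : Type} [CommRing A] (g : Laur n A) :
    laurMap (RingHom.id A) g = g :=
  AddMonoidAlgebra.ext (Finsupp.ext fun m => Finsupp.mapRange_apply (hf := (RingHom.id A).map_zero))

lemma lpderiv_single {A : Type} [CommRing A] (j : Fin n) (m : Fin n → ℤ) (c : A) :
    lpderiv j (AddMonoidAlgebra.single m c) =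
      AddMonoidAlgebra.single (m - Pi.single j 1) ((m j : A) * c) := by
  rw [lpderiv]
  exact Finsupp.sum_single_index (by simp)

lemma lpderiv_add {A : Type} [CommRing A] (j : Fin n) (g h : Laur n A) :
    lpderiv j (g + h) = lpderiv j g + lpderiv j h := by
  rw [lpderiv, lpderiv, lpderiv, AddMonoidAlgebra.coeff_add]
  exact Finsupp.sum_add_index (by simp) (by intro a _ b₁ b₂; rw [mul_add]; exact AddMonoidAlgebra.single_add _ _ _)

lemma laurMap_lpderiv {A B : Type} [CommRing A] [CommRing B] (φ : A →+* B) (j : Fin n)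
    (g : Laur n A) : laurMap φ (lpderiv j g) = lpderiv j (laurMap φ g) := by
  induction g using AddMonoidAlgebra.induction_linear with
  | zero => simp [lpderiv]
  | add p q hp hq => rw [lpderiv_add, map_add, map_add, lpderiv_add, hp, hq]
  | single m c =>
      rw [lpderiv_single, laurMap_apply_single, laurMap_apply_single, lpderiv_single,
        map_mul, map_intCast]

/-! ### Reduction lemmas -/

variable (f : Fin l → Laur n ℂ)

lemma red_alg (g : Laur n (PS l n)) :
    red f (algebraMap (Laur n (PS l n)) (OXd f) g) =
      algebraMap (Laur n (KK l n)) (OXK f)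
        (laurMap (PowerSeries.constantCoeff (R := KK l n)) g) := by
  rw [red, OXmap, Localization.awayLift]
  exact IsLocalization.Away.lift_eq _ _ g

lemma laurMap_cc_fImg (i : Fin l) :
    laurMap (PowerSeries.constantCoeff (R := KK l n)) (fImg f (PowerSeries.C (R := KK l n)) i) =
      fImg f (RingHom.id (KK l n)) i := by
  rw [fImg, laurMap_comp_apply, redCompat, fImg]

lemma laurMap_cc_FProd :
    laurMap (PowerSeries.constantCoeff (R := KK l n)) (FProd f (PowerSeries.C (R := KK l n))) =
      FProd f (RingHom.id (KK l n)) :=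
  laurMap_FProd f _ _ _ (redCompat l n)

lemma units_map_xU (j : Fin n) :
    Units.map (red f).toMonoidHom (xU f (PowerSeries.C (R := KK l n)) j) =
      xU f (RingHom.id (KK l n)) j := by
  apply Units.ext
  show red f ((xU f (PowerSeries.C (R := KK l n)) j).val) = _
  rw [xU, xU, red_alg, laurMap_lmono]

lemma units_map_fU (i : Fin l) :
    Units.map (red f).toMonoidHom (fU f (PowerSeries.C (R := KK l n)) i) =
      fU f (RingHom.id (KK l n)) i := by
  apply Units.ext
  show red f ((fU f (PowerSeries.C (R := KK l n)) i).val) = _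
  rw [fU, IsUnit.unit_spec, red_alg, laurMap_cc_fImg, fU, IsUnit.unit_spec]

lemma red_coe_unit (u : (OXd f)ˣ) :
    red f (u : OXd f) = ((Units.map (red f).toMonoidHom u : (OXK f)ˣ) : OXK f) :=
  (Units.coe_map _ _).symm

lemma red_xU_inv (j : Fin n) :
    red f (((xU f (PowerSeries.C (R := KK l n)) j)⁻¹ : (OXd f)ˣ) : OXd f) =
      (((xU f (RingHom.id (KK l n)) j)⁻¹ : (OXK f)ˣ) : OXK f) := by
  rw [red_coe_unit, map_inv, units_map_xU]

lemma red_fU_inv (i : Fin l) :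
    red f (((fU f (PowerSeries.C (R := KK l n)) i)⁻¹ : (OXd f)ˣ) : OXd f) =
      (((fU f (RingHom.id (KK l n)) i)⁻¹ : (OXK f)ˣ) : OXK f) := by
  rw [red_coe_unit, map_inv, units_map_fU]

lemma red_fpow (a : Fin l → ℤ) :
    red f (fpow f (PowerSeries.C (R := KK l n)) a) = fpow f (RingHom.id (KK l n)) a := by
  rw [fpow, fpow, red_coe_unit, map_prod]
  congr 1
  refine Finset.prod_congr rfl fun i _ => ?_
  rw [map_zpow, units_map_fU]

lemma red_PS (p : PS l n) :
    red f (algebraMap (PS l n) (OXd f) p) =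
      algebraMap (KK l n) (OXK f) (PowerSeries.constantCoeff (R := KK l n) p) := by
  rw [IsScalarTower.algebraMap_apply (PS l n) (Laur n (PS l n)) (OXd f)]
  rw [show algebraMap (PS l n) (Laur n (PS l n)) p = AddMonoidAlgebra.single 0 p by
    rw [AddMonoidAlgebra.coe_algebraMap]; simp]
  rw [red_alg, laurMap_apply_single]
  rw [IsScalarTower.algebraMap_apply (KK l n) (Laur n (KK l n)) (OXK f)]
  congr 1

lemma red_K (c : KK l n) :
    red f (algebraMap (KK l n) (OXd f) c) = algebraMap (KK l n) (OXK f) c := by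
  rw [IsScalarTower.algebraMap_apply (KK l n) (PS l n) (OXd f), red_PS]
  congr 1

lemma red_vElt (a : Fin l → ℤ) (b : Fin n → ℤ) (j : Fin n) :
    red f (vElt f (PowerSeries.C (R := KK l n)) PowerSeries.X a b j) =
      algebraMap (Laur n (KK l n)) (OXK f) (lmono fun _ => 1) *
        fpow f (RingHom.id (KK l n)) a *
        algebraMap (Laur n (KK l n)) (OXK f) (lmono b) * wElt f j := by
  rw [vElt, wElt]
  simp only [map_mul, map_sub, map_sum, red_alg, laurMap_lmono, red_fpow, red_PS,
    red_xU_inv, red_fU_inv, laurMap_lpderiv, laurMap_cc_fImg, map_add,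
    PowerSeries.constantCoeff_C, PowerSeries.constantCoeff_X, zero_mul, add_zero,
    sub_zero, RingHom.id_apply, map_zero, mul_zero, zero_mul, add_zero]

/-- The Laurent monomial `x^b` as a unit of `O(X_K)`. -/
def lUnit (b : Fin n → ℤ) : (OXK f)ˣ where
  val := algebraMap (Laur n (KK l n)) (OXK f) (lmono b)
  inv := algebraMap (Laur n (KK l n)) (OXK f) (lmono (-b))
  val_inv := by
    rw [← map_mul]
    simp only [lmono, AddMonoidAlgebra.single_mul_single, add_neg_cancel, one_mul]
    rw [← AddMonoidAlgebra.one_def, map_one]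
  inv_val := by
    rw [← map_mul]
    simp only [lmono, AddMonoidAlgebra.single_mul_single, neg_add_cancel, one_mul]
    rw [← AddMonoidAlgebra.one_def, map_one]

lemma lmono_mul {A : Type} [CommRing A] (b b' : Fin n → ℤ) :
    (lmono b : Laur n A) * lmono b' = lmono (b + b') := by
  simp [lmono, AddMonoidAlgebra.single_mul_single]

lemma lmono_zero {A : Type} [CommRing A] : (lmono (0 : Fin n → ℤ) : Laur n A) = 1 :=
  (AddMonoidAlgebra.one_def).symm

lemma fpow_add {A : Type} [CommRing A] (κ : KK l n →+* A) (a a' : Fin l → ℤ) :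
    fpow f κ (a + a') = fpow f κ a * fpow f κ a' := by
  rw [fpow, fpow, fpow, ← Units.val_mul, ← Finset.prod_mul_distrib]
  congr 1
  refine Finset.prod_congr rfl fun i _ => ?_
  rw [Pi.add_apply, zpow_add]

lemma fpow_zero {A : Type} [CommRing A] (κ : KK l n →+* A) :
    fpow f κ (0 : Fin l → ℤ) = 1 := by
  simp [fpow]

/-- The unit `x₁⋯xₙ · f^a · x^b` of `O(X_K)`. -/
def monU (a : Fin l → ℤ) (b : Fin n → ℤ) : OXK f :=
  algebraMap (Laur n (KK l n)) (OXK f) (lmono fun _ => 1) * fpow f (RingHom.id (KK l n)) a *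
    algebraMap (Laur n (KK l n)) (OXK f) (lmono b)

lemma monU_mul (a a' : Fin l → ℤ) (b b' : Fin n → ℤ) :
    monU f a b * monU f a' b' = monU f (a + a') (b + b' + fun _ => 1) := by
  rw [monU, monU, monU, fpow_add]
  rw [show lmono (b + b' + fun _ => 1) = (lmono b : Laur n (KK l n)) * lmono b' *
      lmono (fun _ => 1) by rw [lmono_mul, lmono_mul]]
  rw [map_mul, map_mul]
  ring

lemma monU_one : monU f 0 (fun _ => (-1 : ℤ)) = 1 := by
  rw [monU, fpow_zero, mul_one, ← map_mul, lmono_mul]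
  rw [show ((fun _ => 1) + fun _ => (-1 : ℤ)) = (0 : Fin n → ℤ) by funext i; simp]
  rw [lmono_zero, map_one]

/-! ### `O(X_K)` is spanned over `K` by the units `monU` -/

lemma prod_fU_val :
    (((∏ i, fU f (RingHom.id (KK l n)) i) : (OXK f)ˣ) : OXK f) =
      algebraMap (Laur n (KK l n)) (OXK f) (FProd f (RingHom.id (KK l n))) := by
  rw [show (((∏ i, fU f (RingHom.id (KK l n)) i) : (OXK f)ˣ) : OXK f) =
      ∏ i, ((fU f (RingHom.id (KK l n)) i : (OXK f)ˣ) : OXK f) from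
    map_prod (Units.coeHom (OXK f)) _ _]
  refine Eq.trans (Finset.prod_congr rfl fun i _ => IsUnit.unit_spec _) ?_
  exact (map_prod (algebraMap (Laur n (KK l n)) (OXK f))
    (fun i => fImg f (RingHom.id (KK l n)) i) Finset.univ).symm

lemma fpow_negk (k : ℕ) :
    fpow f (RingHom.id (KK l n)) (fun _ => -(k : ℤ)) =
      IsLocalization.mk' (OXK f) (1 : Laur n (KK l n))
        (⟨FProd f (RingHom.id (KK l n)) ^ k, ⟨k, rfl⟩⟩ :
          Submonoid.powers (FProd f (RingHom.id (KK l n)))) := by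
  set sK : Submonoid.powers (FProd f (RingHom.id (KK l n))) :=
    ⟨FProd f (RingHom.id (KK l n)) ^ k, ⟨k, rfl⟩⟩ with hsK
  set U : (OXK f)ˣ := (∏ i, fU f (RingHom.id (KK l n)) i) ^ k with hU
  have hval : (U : OXK f) =
      algebraMap (Laur n (KK l n)) (OXK f) (FProd f (RingHom.id (KK l n)) ^ k) := by
    rw [hU, Units.val_pow_eq_pow_val, prod_fU_val, map_pow]
  have h2 : fpow f (RingHom.id (KK l n)) (fun _ => -(k : ℤ)) = ((U⁻¹ : (OXK f)ˣ) : OXK f) := by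
    rw [fpow]
    congr 1
    rw [hU]
    simp only [zpow_neg, zpow_natCast, ← Finset.prod_inv_distrib, ← inv_pow, Finset.prod_pow]
  have hspec := IsLocalization.mk'_spec (OXK f) (1 : Laur n (KK l n)) sK
  rw [map_one] at hspec
  rw [h2]
  calc ((U⁻¹ : (OXK f)ˣ) : OXK f)
      = IsLocalization.mk' (OXK f) (1 : Laur n (KK l n)) sK * (U : OXK f) *
          ((U⁻¹ : (OXK f)ˣ) : OXK f) := by
        have hspec' : IsLocalization.mk' (OXK f) 1 sK *
            algebraMap (Laur n (KK l n)) (OXK f) (FProd f (RingHom.id (KK l n)) ^ k) = 1 :=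
          hspec
        rw [hval, hspec', one_mul]
    _ = IsLocalization.mk' (OXK f) (1 : Laur n (KK l n)) sK := by
        rw [mul_assoc, Units.mul_inv, mul_one]

lemma mem_span_monU (r : OXK f) :
    r ∈ Submodule.span (KK l n) {g : OXK f | ∃ a b, g = monU f a b} := by
  obtain ⟨⟨x, s⟩, hx⟩ :=
    IsLocalization.mk'_surjective (Submonoid.powers (FProd f (RingHom.id (KK l n)))) r
  dsimp only at hx
  obtain ⟨k, hk⟩ := s.2
  have hs : s = ⟨FProd f (RingHom.id (KK l n)) ^ k, ⟨k, rfl⟩⟩ := Subtype.ext hk.symm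
  rw [← hx, hs, IsLocalization.mk'_eq_mul_mk'_one, ← fpow_negk]
  clear hx hk hs
  induction x using AddMonoidAlgebra.induction_linear with
  | zero => rw [map_zero, zero_mul]; exact zero_mem _
  | add p q hp hq => rw [map_add, add_mul]; exact add_mem hp hq
  | single m c =>
      have h1 : (AddMonoidAlgebra.single m c : Laur n (KK l n)) = c • lmono m := by
        rw [show (lmono m : Laur n (KK l n)) = AddMonoidAlgebra.single m 1 from rfl,
          AddMonoidAlgebra.smul_single', mul_one]
      rw [h1, Algebra.smul_def, map_mul,
        ← IsScalarTower.algebraMap_apply (KK l n) (Laur n (KK l n)) (OXK f),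
        mul_assoc, ← Algebra.smul_def]
      refine Submodule.smul_mem _ _ (Submodule.subset_span ?_)
      refine ⟨fun _ => -(k : ℤ), m - fun _ => 1, ?_⟩
      rw [monU]
      rw [show (lmono m : Laur n (KK l n)) =
          lmono (fun _ => 1) * lmono (m - fun _ => 1) by
        rw [lmono_mul]; congr 1; funext i; simp]
      rw [map_mul]
      ring

/-! ### The likelihood ideal as a `K`-span -/

def TSet : Set (OXK f) := {g : OXK f | ∃ a b j, g = monU f a b * wElt f j}

lemma monU_mul_T_mem {t : OXK f} (ht : t ∈ Submodule.span (KK l n) (TSet f))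
    (a : Fin l → ℤ) (b : Fin n → ℤ) :
    monU f a b * t ∈ Submodule.span (KK l n) (TSet f) := by
  induction ht using Submodule.span_induction with
  | mem x hx =>
      obtain ⟨a', b', j, rfl⟩ := hx
      rw [← mul_assoc, monU_mul]
      exact Submodule.subset_span ⟨_, _, _, rfl⟩
  | zero => rw [mul_zero]; exact zero_mem _
  | add x y _ _ hx hy => rw [mul_add]; exact add_mem hx hy
  | smul c x _ hx => rw [mul_smul_comm]; exact Submodule.smul_mem _ _ hx

lemma mul_T_mem (r : OXK f) {t : OXK f} (ht : t ∈ Submodule.span (KK l n) (TSet f)) :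
    r * t ∈ Submodule.span (KK l n) (TSet f) := by
  have hr := mem_span_monU f r
  induction hr using Submodule.span_induction with
  | mem x hx => obtain ⟨a, b, rfl⟩ := hx; exact monU_mul_T_mem f ht a b
  | zero => rw [zero_mul]; exact zero_mem _
  | add x y _ _ hx hy => rw [add_mul]; exact add_mem hx hy
  | smul c x _ hx => rw [smul_mul_assoc]; exact Submodule.smul_mem _ _ hx

lemma likeIdeal_sub_T {y : OXK f} (hy : y ∈ likeIdeal f) :
    y ∈ Submodule.span (KK l n) (TSet f) := by
  have hy' : y ∈ Submodule.span (OXK f) {g : OXK f | ∃ j, g = wElt f j} := hy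
  clear hy
  induction hy' using Submodule.span_induction with
  | mem x hx =>
      obtain ⟨j, rfl⟩ := hx
      refine Submodule.subset_span ⟨0, fun _ => (-1 : ℤ), j, ?_⟩
      rw [monU_one, one_mul]
  | zero => exact zero_mem _
  | add x1 y1 _ _ hx1 hy1 => exact add_mem hx1 hy1
  | smul c x _ hx => rw [smul_eq_mul]; exact mul_T_mem f c hx

lemma T_sub_likeIdeal {y : OXK f} (hy : y ∈ Submodule.span (KK l n) (TSet f)) :
    y ∈ likeIdeal f := by
  induction hy using Submodule.span_induction with
  | mem x hx =>
      obtain ⟨a, b, j, rfl⟩ := hx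
      exact Ideal.mul_mem_left _ _ (Ideal.subset_span ⟨j, rfl⟩)
  | zero => exact Ideal.zero_mem _
  | add x1 y1 _ _ hx1 hy1 => exact Ideal.add_mem _ hx1 hy1
  | smul c x _ hx =>
      rw [show c • x = algebraMap (KK l n) (OXK f) c * x from Algebra.smul_def c x]
      exact Ideal.mul_mem_left _ _ hx

/-! ### The kernel of `red` -/

lemma FProdK_ne_zero (hf : ∀ i, f i ≠ 0) : FProd f (RingHom.id (KK l n)) ≠ 0 := by
  have : ∀ i ∈ Finset.univ, fImg f (RingHom.id (KK l n)) i ≠ 0 := by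
    intro i _ h0
    exact hf i (laurMap_injective _ (RingHom.injective _) (h0.trans (map_zero _).symm))
  exact Finset.prod_ne_zero_iff.mpr this

def psShift (p : PS l n) : PS l n := PowerSeries.mk fun k => PowerSeries.coeff (k + 1) p

lemma psShift_zero : psShift (0 : PS l n) = 0 := by
  ext k; simp [psShift]

lemma X_mul_psShift (p : PS l n) (h : PowerSeries.constantCoeff (R := KK l n) p = 0) :
    PowerSeries.X * psShift p = p := by
  ext k
  cases k with
  | zero => simp [map_mul, PowerSeries.constantCoeff_X, h]
  | succ k => rw [PowerSeries.coeff_succ_X_mul]; simp [psShift]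

lemma ker_red (hf : ∀ i, f i ≠ 0) (z : OXd f) (hz : red f z = 0) : z ∈ deltaMod f := by
  obtain ⟨⟨x, s⟩, hx⟩ :=
    IsLocalization.mk'_surjective (Submonoid.powers (FProd f (PowerSeries.C (R := KK l n)))) z
  dsimp only at hx
  have h1 : algebraMap (Laur n (KK l n)) (OXK f)
      (laurMap (PowerSeries.constantCoeff (R := KK l n)) x) = 0 := by
    have h2 := congrArg (red f) (IsLocalization.mk'_spec (OXd f) x s)
    rw [map_mul, hx, hz, zero_mul, red_alg] at h2
    exact h2.symm
  obtain ⟨m, hm⟩ := (IsLocalization.map_eq_zero_iff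
    (Submonoid.powers (FProd f (RingHom.id (KK l n)))) (OXK f) _).mp h1
  obtain ⟨k2, hk2⟩ := m.2
  have h3 : laurMap (PowerSeries.constantCoeff (R := KK l n)) x = 0 := by
    have hmne : (m : Laur n (KK l n)) ≠ 0 := by
      rw [← hk2]; exact pow_ne_zero _ (FProdK_ne_zero f hf)
    rcases mul_eq_zero.mp hm with h | h
    · exact absurd h hmne
    · exact h
  have hcc : ∀ mi : Fin n → ℤ, PowerSeries.constantCoeff (R := KK l n) (x.coeff mi) = 0 := by
    intro mi
    have h4 : (laurMap (PowerSeries.constantCoeff (R := KK l n)) x).coeff mi =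
        (0 : Laur n (KK l n)).coeff mi := by rw [h3]
    rwa [laurMap_coeff, AddMonoidAlgebra.coeff_zero, Finsupp.coe_zero, Pi.zero_apply] at h4
  set x' : Laur n (PS l n) := AddMonoidAlgebra.ofCoeff (Finsupp.mapRange psShift psShift_zero x.coeff) with hx'
  have h4 : AddMonoidAlgebra.single (0 : Fin n → ℤ) (PowerSeries.X : PS l n) * x' = x := by
    refine AddMonoidAlgebra.ext (Finsupp.ext fun mi => ?_)
    rw [AddMonoidAlgebra.coeff_single_zero_mul]
    show PowerSeries.X * x'.coeff mi = x.coeff mi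
    rw [hx', AddMonoidAlgebra.coeff_ofCoeff, Finsupp.mapRange_apply]
    exact X_mul_psShift _ (hcc mi)
  refine Submodule.subset_span ⟨IsLocalization.mk' (OXd f) x' s, ?_⟩
  rw [← hx, ← h4, IsLocalization.mk'_eq_mul_mk'_one, map_mul, mul_assoc,
    ← IsLocalization.mk'_eq_mul_mk'_one]
  congr 1

lemma red_smul (p : PS l n) (z : OXd f) :
    red f (p • z) = (PowerSeries.constantCoeff (R := KK l n) p) • red f z := by
  rw [show p • z = algebraMap (PS l n) (OXd f) p * z from
      Algebra.smul_def (R := PS l n) (A := OXd f) p z,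
    map_mul, red_PS,
    show (PowerSeries.constantCoeff (R := KK l n) p) • red f z =
      algebraMap (KK l n) (OXK f) (PowerSeries.constantCoeff (R := KK l n) p) * red f z from
        Algebra.smul_def (R := KK l n) (A := OXK f) _ _]

lemma red_mk' (x : Laur n (PS l n)) (k : ℕ) :
    red f (IsLocalization.mk' (OXd f) x
      (⟨FProd f (PowerSeries.C (R := KK l n)) ^ k, ⟨k, rfl⟩⟩ :
        Submonoid.powers (FProd f (PowerSeries.C (R := KK l n))))) =
    IsLocalization.mk' (OXK f) (laurMap (PowerSeries.constantCoeff (R := KK l n)) x)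
      (⟨FProd f (RingHom.id (KK l n)) ^ k, ⟨k, rfl⟩⟩ :
        Submonoid.powers (FProd f (RingHom.id (KK l n)))) := by
  set sd : Submonoid.powers (FProd f (PowerSeries.C (R := KK l n))) :=
    ⟨FProd f (PowerSeries.C (R := KK l n)) ^ k, ⟨k, rfl⟩⟩ with hsd
  set sk : Submonoid.powers (FProd f (RingHom.id (KK l n))) :=
    ⟨FProd f (RingHom.id (KK l n)) ^ k, ⟨k, rfl⟩⟩ with hsk
  have hu : IsUnit (algebraMap (Laur n (KK l n)) (OXK f) (FProd f (RingHom.id (KK l n)) ^ k)) := by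
    rw [map_pow]
    exact (IsLocalization.Away.algebraMap_isUnit _).pow k
  have hL : red f (IsLocalization.mk' (OXd f) x sd) *
      algebraMap (Laur n (KK l n)) (OXK f) (FProd f (RingHom.id (KK l n)) ^ k) =
      algebraMap (Laur n (KK l n)) (OXK f) (laurMap (PowerSeries.constantCoeff (R := KK l n)) x) := by
    have h5 : algebraMap (Laur n (KK l n)) (OXK f) (FProd f (RingHom.id (KK l n)) ^ k) =
        red f (algebraMap (Laur n (PS l n)) (OXd f) (FProd f (PowerSeries.C (R := KK l n)) ^ k)) := by
      rw [red_alg]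
      congr 1
      rw [map_pow, laurMap_cc_FProd]
    rw [h5, ← map_mul]
    have h6 : IsLocalization.mk' (OXd f) x sd *
        algebraMap (Laur n (PS l n)) (OXd f) (FProd f (PowerSeries.C (R := KK l n)) ^ k) =
        algebraMap (Laur n (PS l n)) (OXd f) x := IsLocalization.mk'_spec (OXd f) x sd
    rw [h6, red_alg]
  have hR : IsLocalization.mk' (OXK f) (laurMap (PowerSeries.constantCoeff (R := KK l n)) x) sk *
      algebraMap (Laur n (KK l n)) (OXK f) (FProd f (RingHom.id (KK l n)) ^ k) =
      algebraMap (Laur n (KK l n)) (OXK f) (laurMap (PowerSeries.constantCoeff (R := KK l n)) x) :=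
    IsLocalization.mk'_spec (OXK f) _ sk
  exact hu.mul_right_cancel (hL.trans hR.symm)

end Stmt5Aux

/- STATEMENT 5 -/
open Stmt5Aux

theorem stmt5 {l n : ℕ} (hn : 1 ≤ n) (hl : 1 ≤ l)
    (f : Fin l → Laur n ℂ) (hf : ∀ i, f i ≠ 0) :
    Function.Surjective (red f) ∧
    (∀ c : KK l n, red f (algebraMap (KK l n) (OXd f) c) =
        algebraMap (KK l n) (OXK f) c) ∧
    (∀ g : OXd f, red f g ∈ likeIdeal f ↔ g ∈ Vd f ⊔ deltaMod f) := by
  refine ⟨?_, fun c => red_K f c, fun g => ⟨?_, ?_⟩⟩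
  · -- surjectivity
    intro z
    obtain ⟨⟨x, s⟩, hx⟩ := IsLocalization.mk'_surjective
      (Submonoid.powers (FProd f (RingHom.id (KK l n)))) z
    obtain ⟨k, hk⟩ := s.2
    refine ⟨IsLocalization.mk' (OXd f) (laurMap (PowerSeries.C (R := KK l n)) x)
      (⟨FProd f (PowerSeries.C (R := KK l n)) ^ k, ⟨k, rfl⟩⟩ :
        Submonoid.powers (FProd f (PowerSeries.C (R := KK l n)))), ?_⟩
    rw [red_mk']
    have hccC : laurMap (PowerSeries.constantCoeff (R := KK l n))
        (laurMap (PowerSeries.C (R := KK l n)) x) = x := by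
      rw [laurMap_comp_apply,
        show (PowerSeries.constantCoeff (R := KK l n)).comp (PowerSeries.C (R := KK l n)) =
          RingHom.id (KK l n) from RingHom.ext fun a => PowerSeries.constantCoeff_C a,
        laurMap_id]
    rw [hccC, ← hx]
    congr 1
    exact Subtype.ext hk
  · -- red g ∈ I_K → g ∈ V_d ⊔ δ·O
    intro hg
    have hT := likeIdeal_sub_T f hg
    have key : ∀ (y : OXK f), y ∈ Submodule.span (KK l n) (TSet f) →
        ∃ h ∈ Vd f, red f h = y := by
      intro y hy
      induction hy using Submodule.span_induction with
      | mem x hx =>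
          obtain ⟨a, b, j, rfl⟩ := hx
          exact ⟨vElt f (PowerSeries.C (R := KK l n)) PowerSeries.X a b j,
            Submodule.subset_span ⟨a, b, j, rfl⟩, red_vElt f a b j⟩
      | zero => exact ⟨0, zero_mem _, map_zero _⟩
      | add x1 y1 _ _ h1 h2 =>
          obtain ⟨u1, hu1, hr1⟩ := h1
          obtain ⟨u2, hu2, hr2⟩ := h2
          exact ⟨u1 + u2, add_mem hu1 hu2, by rw [map_add, hr1, hr2]⟩
      | smul c x1 _ h1 =>
          obtain ⟨u0, hu0, hr0⟩ := h1
          refine ⟨PowerSeries.C (R := KK l n) c • u0, Submodule.smul_mem _ _ hu0, ?_⟩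
          rw [red_smul, PowerSeries.constantCoeff_C, hr0]
    obtain ⟨h, hh, hr⟩ := key _ hT
    refine Submodule.mem_sup.mpr ⟨h, hh, g - h,
      ker_red f hf _ (by rw [map_sub, hr, sub_self]), by ring⟩
  · -- g ∈ V_d ⊔ δ·O → red g ∈ I_K
    intro hg
    obtain ⟨v, hv, d, hd, hvd⟩ := Submodule.mem_sup.mp hg
    have hredv : red f v ∈ likeIdeal f := by
      have hv' : v ∈ Submodule.span (PS l n)
          {g : OXd f | ∃ a b j,
            g = vElt f (PowerSeries.C (R := KK l n)) PowerSeries.X a b j} := hv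
      clear hv hvd hg
      induction hv' using Submodule.span_induction with
      | mem x hx =>
          obtain ⟨a, b, j, rfl⟩ := hx
          rw [red_vElt]
          exact Ideal.mul_mem_left _ _ (Ideal.subset_span ⟨j, rfl⟩)
      | zero => rw [map_zero]; exact Ideal.zero_mem _
      | add x1 y1 _ _ h1 h2 => rw [map_add]; exact Ideal.add_mem _ h1 h2
      | smul c x1 _ h1 =>
          rw [red_smul,
            show (PowerSeries.constantCoeff (R := KK l n) c) • red f x1 =
              algebraMap (KK l n) (OXK f) (PowerSeries.constantCoeff (R := KK l n) c) *
                red f x1 from Algebra.smul_def (R := KK l n) (A := OXK f) _ _]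
          exact Ideal.mul_mem_left _ _ h1
    have hredd : red f d = 0 := by
      have hd' : d ∈ Submodule.span (PS l n)
          {g : OXd f | ∃ h, g = algebraMap (PS l n) (OXd f) PowerSeries.X * h} := hd
      clear hd hvd hg
      induction hd' using Submodule.span_induction with
      | mem x hx =>
          obtain ⟨h0, rfl⟩ := hx
          rw [map_mul, red_PS, PowerSeries.constantCoeff_X, map_zero, zero_mul]
      | zero => exact map_zero _
      | add x1 y1 _ _ h1 h2 => rw [map_add, h1, h2, add_zero]
      | smul c x1 _ h1 =>
          rw [red_smul, h1]
          exact smul_zero (A := OXK f) ((PowerSeries.constantCoeff (R := KK l n)) c)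
    rw [← hvd, map_add, hredd, add_zero]
    exact hredv

end
end

section
/- Assume the likelihood quotient O(X_K)/I_K is a nonzero finite-dimensional K-vector space, and let K̄ be an algebraic closure of K. Let Z ⊆ (K̄∖{0})ⁿ be the set of points p with f_i(p) ≠ 0 for all i = 1,…,ℓ and w_j(p) = 0 for all j = 1,…,n (the solutions of the likelihood equations). Then for each k ∈ {1,…,n}, the set of eigenvalues in K̄ of the K-linear map O(X_K)/I_K → O(X_K)/I_K, [g] ↦ [x_k·g], equals {p_k : p ∈ Z}, and for each i ∈ {1,…,ℓ} the set of eigenvalues in K̄ of [g] ↦ [f_i^{−1}·g] equals {f_i(p)^{−1} : p ∈ Z}. -/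
set_option maxHeartbeats 1000000
set_option synthInstance.maxHeartbeats 400000

noncomputable section

/-- The algebraic closure of K. -/
abbrev Kbar (l n : ℕ) : Type := AlgebraicClosure (KK l n)

/-- Evaluation of a Laurent polynomial with complex coefficients at a point
p with (intended) nonzero coordinates, over a field F via φ : ℂ → F. -/
def laurEval {n : ℕ} {F : Type} [Field F] (φ : ℂ →+* F) (p : Fin n → F)
    (g : Laur n ℂ) : F :=
  Finsupp.sum g.coeff fun m c => φ c * ∏ k, p k ^ (m k)

/-- The coefficient embedding ℂ → K̄. -/
def cbar (l n : ℕ) : ℂ →+* Kbar l n :=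
  (algebraMap (KK l n) (Kbar l n)).comp (cC l n)

/-- The set of solutions of the likelihood equations in (K̄ ∖ {0})ⁿ. -/
def critSet {l n : ℕ} (f : Fin l → Laur n ℂ) : Set (Fin n → Kbar l n) :=
  {p | (∀ k, p k ≠ 0) ∧ (∀ i, laurEval (cbar l n) p (f i) ≠ 0) ∧
    (∀ j, algebraMap (KK l n) (Kbar l n) (nuGen l n j) * (p j)⁻¹ -
      ∑ i : Fin l, algebraMap (KK l n) (Kbar l n) (sGen l n i) *
        ((laurEval (cbar l n) p (f i))⁻¹ * laurEval (cbar l n) p (lpderiv j (f i))) = 0)}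


set_option linter.unusedSectionVars false
section Abstract
open Polynomial
variable {F : Type*} [Field F] {B : Type*} [CommRing B] [Algebra F B]
  [FiniteDimensional F B]

lemma charpoly_eval_eq_det {M : Type*} [AddCommGroup M] [Module F M]
    [Module.Finite F M] (g : M →ₗ[F] M) (z : F) :
    (LinearMap.charpoly g).eval z = LinearMap.det (z • (LinearMap.id : M →ₗ[F] M) - g) := by
  classical
  let b := Module.Free.chooseBasis F M
  rw [← LinearMap.charpoly_toMatrix g b, ← LinearMap.det_toMatrix b]
  rw [Matrix.charpoly, _root_.eval_det, Matrix.matPolyEquiv_charmatrix]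
  rw [eval_sub, eval_X, eval_C]
  congr 1
  rw [map_sub, LinearEquiv.map_smul, LinearMap.toMatrix_id]
  ext i j
  simp [Matrix.scalar_apply, Matrix.smul_apply, Matrix.one_apply, Matrix.diagonal]

lemma det_mulLeft_eq_zero_iff [Nontrivial B] (w : B) :
    LinearMap.det (LinearMap.mulLeft F w) = 0 ↔ ¬ IsUnit w := by
  constructor
  · intro h hu
    obtain ⟨u, rfl⟩ := hu
    have h1 : LinearMap.det (LinearMap.mulLeft F (u : B)) *
        LinearMap.det (LinearMap.mulLeft F ((u⁻¹ : Bˣ) : B)) = 1 := by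
      rw [← LinearMap.det_comp, ← LinearMap.mulLeft_mul, Units.mul_inv,
        LinearMap.mulLeft_one, LinearMap.det_id]
    rw [h, zero_mul] at h1
    exact zero_ne_one h1
  · intro hu
    by_contra hdet
    have hsurj : Function.Surjective (LinearMap.mulLeft F w) :=
      (LinearMap.equivOfDetNeZero _ hdet).surjective
    obtain ⟨q, hq⟩ := hsurj 1
    exact hu (IsUnit.of_mul_eq_one q hq)

lemma smul_id_sub_mulLeft (z : F) (v : B) :
    z • (LinearMap.id : B →ₗ[F] B) - LinearMap.mulLeft F v
      = LinearMap.mulLeft F (algebraMap F B z - v) := by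
  ext b
  simp [LinearMap.mulLeft_apply, sub_mul, Algebra.smul_def]

lemma baseChange_mulLeft (Fbar : Type*) [Field Fbar] [Algebra F Fbar] (v : B) :
    LinearMap.baseChange Fbar (LinearMap.mulLeft F v)
      = LinearMap.mulLeft Fbar ((1 : Fbar) ⊗ₜ[F] v) := by
  apply LinearMap.ext; intro x
  induction x using TensorProduct.induction_on with
  | zero => simp
  | tmul a q => simp [Algebra.TensorProduct.tmul_mul_tmul]
  | add a b ha hb => simp only [map_add, ha, hb, mul_add]

variable (Fbar : Type*) [Field Fbar] [Algebra F Fbar] [IsAlgClosed Fbar]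

lemma nontrivial_baseChange [Nontrivial B] :
    Nontrivial (TensorProduct F Fbar B) := by
  have h1 : 0 < Module.finrank F B := Module.finrank_pos
  let b := Module.finBasis F B
  exact nontrivial_of_ne ((b.baseChange Fbar) ⟨0, h1⟩) 0 (Module.Basis.ne_zero _ _)

lemma aeval_charpoly_mulLeft_eq_zero_iff [Nontrivial B] (v : B) (z : Fbar) :
    Polynomial.aeval z (LinearMap.charpoly (LinearMap.mulLeft F v)) = 0 ↔
      ∃ ψ : B →ₐ[F] Fbar, ψ v = z := by
  have hnt : Nontrivial (TensorProduct F Fbar B) := nontrivial_baseChange Fbar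
  have key : Polynomial.aeval z (LinearMap.charpoly (LinearMap.mulLeft F v)) = 0 ↔
      ¬ IsUnit ((1 : Fbar) ⊗ₜ[F] v - algebraMap Fbar (TensorProduct F Fbar B) z) := by
    rw [aeval_def, ← eval_map, ← LinearMap.charpoly_baseChange,
      charpoly_eval_eq_det, baseChange_mulLeft, smul_id_sub_mulLeft,
      det_mulLeft_eq_zero_iff]
    constructor
    · intro h hu
      exact h (by simpa [neg_sub] using hu.neg)
    · intro h hu
      exact h (by simpa [neg_sub] using hu.neg)
  rw [key]
  constructor
  · intro hnu
    set w := (1 : Fbar) ⊗ₜ[F] v - algebraMap Fbar (TensorProduct F Fbar B) z with hw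
    obtain ⟨m, hm, hwm⟩ := exists_max_ideal_of_mem_nonunits (mem_nonunits_iff.mpr hnu)
    haveI := hm
    haveI : Module.Finite Fbar (TensorProduct F Fbar B ⧸ m) :=
      Module.Finite.of_surjective (Ideal.Quotient.mkₐ Fbar m).toLinearMap
        Ideal.Quotient.mk_surjective
    haveI : Algebra.IsIntegral Fbar (TensorProduct F Fbar B ⧸ m) :=
      Algebra.IsIntegral.of_finite _ _
    have hsurj := (IsAlgClosed.algebraMap_bijective_of_isIntegral
      (k := Fbar) (K := TensorProduct F Fbar B ⧸ m)).2
    have hinj : Function.Injective (algebraMap Fbar (TensorProduct F Fbar B ⧸ m)) :=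
      RingHom.injective _
    let e : Fbar ≃+* (TensorProduct F Fbar B ⧸ m) :=
      RingEquiv.ofBijective (algebraMap Fbar _) ⟨hinj, hsurj⟩
    let ψbar : TensorProduct F Fbar B →ₐ[Fbar] Fbar :=
      { toRingHom := e.symm.toRingHom.comp (Ideal.Quotient.mk m)
        commutes' := fun c => by
          show e.symm (Ideal.Quotient.mk m (algebraMap Fbar _ c)) = c
          have : (Ideal.Quotient.mk m) (algebraMap Fbar (TensorProduct F Fbar B) c)
              = algebraMap Fbar (TensorProduct F Fbar B ⧸ m) c := rfl
          rw [this]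
          exact e.symm_apply_apply c }
    have hψw : ψbar w = 0 := by
      show e.symm (Ideal.Quotient.mk m w) = 0
      rw [Ideal.Quotient.eq_zero_iff_mem.mpr hwm, map_zero]
    refine ⟨(ψbar.restrictScalars F).comp Algebra.TensorProduct.includeRight, ?_⟩
    have h1 : ψbar ((1 : Fbar) ⊗ₜ[F] v) - z = 0 := by
      have h2 : ψbar (algebraMap Fbar (TensorProduct F Fbar B) z) = z := ψbar.commutes z
      rw [← h2, ← map_sub, hψw]
    simpa using sub_eq_zero.mp h1
  · rintro ⟨ψ, hψ⟩ hu
    let ψbar : TensorProduct F Fbar B →ₐ[F] Fbar :=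
      Algebra.TensorProduct.productMap ((AlgHom.id Fbar Fbar).restrictScalars F) ψ
    have h0 : ψbar ((1 : Fbar) ⊗ₜ[F] v - algebraMap Fbar (TensorProduct F Fbar B) z) = 0 := by
      rw [map_sub, Algebra.TensorProduct.algebraMap_apply]
      simp [ψbar, Algebra.TensorProduct.productMap_apply_tmul, hψ]
    have := hu.map ψbar
    rw [h0] at this
    exact not_isUnit_zero this
end Abstract

section LaurLemmas
variable {n : ℕ}

lemma lmono_add {A : Type} [CommRing A] (b b' : Fin n → ℤ) :
    (lmono (b + b') : Laur n A) = lmono b * lmono b' := by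
  simp [lmono, AddMonoidAlgebra.single_mul_single]

lemma lmono_zero {A : Type} [CommRing A] : (lmono (0 : Fin n → ℤ) : Laur n A) = 1 := rfl

variable {R E : Type} [CommRing R] [Field E] (χ : Laur n R →+* E)

lemma chi_lmono_mul_inv (b : Fin n → ℤ) : χ (lmono b) * χ (lmono (-b)) = 1 := by
  rw [← map_mul, ← lmono_add]
  simp [lmono_zero]

lemma chi_lmono_ne_zero (b : Fin n → ℤ) : χ (lmono b) ≠ 0 :=
  left_ne_zero_of_mul_eq_one (chi_lmono_mul_inv χ b)

lemma chi_lmono_single (k : Fin n) (m : ℤ) :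
    χ (lmono (Pi.single k m)) = χ (lmono (Pi.single k 1)) ^ m := by
  have hne := chi_lmono_ne_zero χ (Pi.single k 1)
  induction m using Int.induction_on with
  | zero => simp [lmono_zero]
  | succ m ih =>
    have : (Pi.single k (m + 1 : ℤ) : Fin n → ℤ) = Pi.single k (m : ℤ) + Pi.single k 1 := by
      rw [← Pi.single_add]
    rw [this, lmono_add, map_mul, ih, zpow_add_one₀ hne]
  | pred m ih =>
    have : (Pi.single k (-m - 1 : ℤ) : Fin n → ℤ) = Pi.single k (-m : ℤ) + Pi.single k (-1) := by
      rw [← Pi.single_add]; ring_nf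
    rw [this, lmono_add, map_mul, ih, zpow_sub_one₀ hne]
    congr 1
    have h2 : (Pi.single k (-1 : ℤ) : Fin n → ℤ) = -Pi.single k 1 := by
      rw [← Pi.single_neg]
    rw [h2]
    field_simp
    rw [mul_comm]
    exact chi_lmono_mul_inv χ (Pi.single k 1)

lemma chi_lmono_eq_prod (b : Fin n → ℤ) :
    χ (lmono b) = ∏ k, χ (lmono (Pi.single k 1)) ^ (b k) := by
  classical
  have key : ∀ s : Finset (Fin n),
      χ (lmono (∑ k ∈ s, Pi.single k (b k))) = ∏ k ∈ s, χ (lmono (Pi.single k 1)) ^ (b k) := by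
    intro s
    induction s using Finset.induction_on with
    | empty => simp [lmono_zero]
    | @insert a s ha ih =>
      rw [Finset.sum_insert ha, lmono_add, map_mul, ih, Finset.prod_insert ha,
        chi_lmono_single]
  have := key Finset.univ
  rwa [Finset.univ_sum_single] at this
end LaurLemmas

section EvalLemmas
variable {n : ℕ}

lemma laurEval_add {F : Type} [Field F] (φ : ℂ →+* F) (p : Fin n → F) (g h : Laur n ℂ) :
    laurEval φ p (g + h) = laurEval φ p g + laurEval φ p h := by
  unfold laurEval
  rw [AddMonoidAlgebra.coeff_add]
  apply Finsupp.sum_add_index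
  · intro m _; simp
  · intro m _ c c'; rw [map_add, add_mul]

lemma laurEval_single {F : Type} [Field F] (φ : ℂ →+* F) (p : Fin n → F)
    (m : Fin n → ℤ) (c : ℂ) :
    laurEval φ p (AddMonoidAlgebra.single m c) = φ c * ∏ k, p k ^ (m k) := by
  unfold laurEval
  rw [AddMonoidAlgebra.coeff_single]
  exact Finsupp.sum_single_index (by simp)

lemma laurMap_single {A B : Type} [CommRing A] [CommRing B] (φ : A →+* B)
    (m : Fin n → ℤ) (c : A) :
    laurMap φ (AddMonoidAlgebra.single m c : Laur n A) = AddMonoidAlgebra.single m (φ c) := by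
  show AddMonoidAlgebra.ofCoeff (Finsupp.mapRange φ φ.map_zero (Finsupp.single m c)) = _
  rw [Finsupp.mapRange_single]
  rfl

lemma chi_laurMap {l : ℕ} (χ : Laur n (KK l n) →+* Kbar l n)
    (hconst : ∀ c : KK l n, χ (AddMonoidAlgebra.single 0 c)
      = algebraMap (KK l n) (Kbar l n) c) (g : Laur n ℂ) :
    χ (laurMap (cC l n) g)
      = laurEval (cbar l n) (fun k => χ (lmono (Pi.single k 1))) g := by
  induction g using AddMonoidAlgebra.induction_linear with
  | zero => rw [map_zero, map_zero]; simp [laurEval]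
  | add g h hg hh => rw [map_add, map_add, laurEval_add, hg, hh]
  | single m c =>
    rw [laurMap_single, laurEval_single]
    have hdecomp : (AddMonoidAlgebra.single m (cC l n c) : Laur n (KK l n))
        = AddMonoidAlgebra.single 0 (cC l n c) * lmono m := by
      simp [lmono, AddMonoidAlgebra.single_mul_single]
    rw [hdecomp, map_mul, hconst, chi_lmono_eq_prod]
    rfl

lemma lpderiv_laurMap {A B : Type} [CommRing A] [CommRing B] (φ : A →+* B) (j : Fin n)
    (g : Laur n A) : lpderiv j (laurMap φ g) = laurMap φ (lpderiv j g) := by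
  induction g using AddMonoidAlgebra.induction_linear with
  | zero => rw [map_zero]; simp [lpderiv]
  | add g h hg hh =>
    rw [map_add]
    have hadd' : ∀ (u v : Laur n A) (C : Type) [CommRing C], True := fun _ _ _ _ => trivial
    have l1 : ∀ {C : Type} [CommRing C] (u v : Laur n C),
        lpderiv j (u + v) = lpderiv j u + lpderiv j v := by
      intro C _ u v
      unfold lpderiv
      rw [AddMonoidAlgebra.coeff_add]
      apply Finsupp.sum_add_index
      · intro m _; simp
      · intro m _ c c'; rw [← AddMonoidAlgebra.single_add]; congr 1; ring
    rw [l1, l1, map_add, hg, hh]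
  | single m c =>
    rw [laurMap_single]
    have l2 : ∀ {C : Type} [CommRing C] (c : C),
        lpderiv j (AddMonoidAlgebra.single m c : Laur n C)
          = AddMonoidAlgebra.single (m - Pi.single j 1) ((m j : C) * c) := by
      intro C _ c
      unfold lpderiv
      rw [AddMonoidAlgebra.coeff_single]
      exact Finsupp.sum_single_index (by simp)
    rw [l2, l2, laurMap_single, map_mul, map_intCast]
end EvalLemmas

section Bridge
variable {l n : ℕ} (f : Fin l → Laur n ℂ)

lemma fImg_id_eq (i : Fin l) :
    fImg f (RingHom.id (KK l n)) i = laurMap (cC l n) (f i) := by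
  unfold fImg
  rw [show cmap (RingHom.id (KK l n)) = cC l n from RingHom.id_comp _]

lemma hom_to_point (ψ : (OXK f ⧸ likeIdeal f) →ₐ[KK l n] Kbar l n) :
    ∃ p ∈ critSet f,
      (∀ k, ψ (Ideal.Quotient.mk (likeIdeal f) ((xU f (RingHom.id (KK l n)) k).val)) = p k) ∧
      (∀ i, ψ (Ideal.Quotient.mk (likeIdeal f)
          (((fU f (RingHom.id (KK l n)) i)⁻¹ : (OXK f)ˣ).val))
        = (laurEval (cbar l n) p (f i))⁻¹) := by
  let χ : Laur n (KK l n) →+* Kbar l n :=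
    (ψ.toRingHom.comp (Ideal.Quotient.mk (likeIdeal f))).comp
      (algebraMap (Laur n (KK l n)) (OXK f))
  set p : Fin n → Kbar l n := fun k => χ (lmono (Pi.single k 1)) with hp
  have hχconst : ∀ c : KK l n, χ (AddMonoidAlgebra.single 0 c)
      = algebraMap (KK l n) (Kbar l n) c := by
    intro c
    have h1 : algebraMap (Laur n (KK l n)) (OXK f) (AddMonoidAlgebra.single 0 c)
        = algebraMap (KK l n) (OXK f) c := by
      rw [IsScalarTower.algebraMap_apply (KK l n) (Laur n (KK l n)) (OXK f),
        AddMonoidAlgebra.coe_algebraMap]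
      simp
    show ψ (Ideal.Quotient.mk (likeIdeal f)
      (algebraMap (Laur n (KK l n)) (OXK f) (AddMonoidAlgebra.single 0 c))) = _
    rw [h1]
    exact ψ.commutes c
  have hcom : ∀ c : KK l n, ψ (Ideal.Quotient.mk (likeIdeal f)
      (algebraMap (KK l n) (OXK f) c)) = algebraMap (KK l n) (Kbar l n) c :=
    fun c => ψ.commutes c
  have hψmul : ∀ u : (OXK f)ˣ, ψ (Ideal.Quotient.mk (likeIdeal f) u.val) *
      ψ (Ideal.Quotient.mk (likeIdeal f) ((u⁻¹ : (OXK f)ˣ) : OXK f)) = 1 := by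
    intro u
    rw [← map_mul, ← map_mul, Units.mul_inv, map_one, map_one]
  have hfi : ∀ i, ψ (Ideal.Quotient.mk (likeIdeal f) ((fU f (RingHom.id (KK l n)) i).val))
      = laurEval (cbar l n) p (f i) := by
    intro i
    have hval : (fU f (RingHom.id (KK l n)) i).val
        = algebraMap (Laur n (KK l n)) (OXK f) (fImg f (RingHom.id (KK l n)) i) :=
      IsUnit.unit_spec _
    rw [hval, fImg_id_eq]
    exact chi_laurMap χ hχconst (f i)
  have hfi_ne : ∀ i, laurEval (cbar l n) p (f i) ≠ 0 := by
    intro i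
    rw [← hfi]
    exact left_ne_zero_of_mul_eq_one (hψmul (fU f (RingHom.id (KK l n)) i))
  have hfinv : ∀ i, ψ (Ideal.Quotient.mk (likeIdeal f)
      (((fU f (RingHom.id (KK l n)) i)⁻¹ : (OXK f)ˣ) : OXK f))
      = (laurEval (cbar l n) p (f i))⁻¹ := by
    intro i
    rw [← hfi]
    exact (inv_eq_of_mul_eq_one_right (hψmul (fU f (RingHom.id (KK l n)) i))).symm
  have hxk : ∀ k, ψ (Ideal.Quotient.mk (likeIdeal f)
      ((xU f (RingHom.id (KK l n)) k).val)) = p k := by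
    intro k; rfl
  have hxinv : ∀ k, ψ (Ideal.Quotient.mk (likeIdeal f)
      (((xU f (RingHom.id (KK l n)) k)⁻¹ : (OXK f)ˣ) : OXK f)) = (p k)⁻¹ := by
    intro k
    rw [← hxk]
    exact (inv_eq_of_mul_eq_one_right (hψmul (xU f (RingHom.id (KK l n)) k))).symm
  have hpd : ∀ (i : Fin l) (j : Fin n), ψ (Ideal.Quotient.mk (likeIdeal f)
      (algebraMap (Laur n (KK l n)) (OXK f)
        (lpderiv j (fImg f (RingHom.id (KK l n)) i))))
      = laurEval (cbar l n) p (lpderiv j (f i)) := by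
    intro i j
    show χ (lpderiv j (fImg f (RingHom.id (KK l n)) i)) = _
    rw [fImg_id_eq, lpderiv_laurMap]
    exact chi_laurMap χ hχconst _
  refine ⟨p, ⟨?_, hfi_ne, ?_⟩, hxk, hfinv⟩
  · intro k
    exact chi_lmono_ne_zero χ _
  · intro j
    have hw : ψ (Ideal.Quotient.mk (likeIdeal f) (wElt f j)) = 0 := by
      have hmem : wElt f j ∈ likeIdeal f := by
        rw [likeIdeal]; exact Ideal.subset_span ⟨j, rfl⟩
      rw [Ideal.Quotient.eq_zero_iff_mem.mpr hmem, map_zero]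
    rw [wElt, map_sub, map_sub, map_mul, map_mul, map_sum, map_sum] at hw
    simp only [map_mul] at hw
    simp only [hcom, hxinv, hfinv, hpd] at hw
    exact hw
end Bridge

section Bridge2
variable {l n : ℕ} (f : Fin l → Laur n ℂ)

lemma point_to_hom (p : Fin n → Kbar l n) (hp : p ∈ critSet f) :
    ∃ ψ : (OXK f ⧸ likeIdeal f) →ₐ[KK l n] Kbar l n,
      (∀ k, ψ (Ideal.Quotient.mk (likeIdeal f) ((xU f (RingHom.id (KK l n)) k).val)) = p k) ∧
      (∀ i, ψ (Ideal.Quotient.mk (likeIdeal f)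
          (((fU f (RingHom.id (KK l n)) i)⁻¹ : (OXK f)ˣ).val))
        = (laurEval (cbar l n) p (f i))⁻¹) := by
  obtain ⟨hpne, hfne, hweq⟩ := hp
  -- the evaluation monoid hom
  let mh : Multiplicative (Fin n → ℤ) →* Kbar l n :=
    { toFun := fun b => ∏ k, (p k) ^ (Multiplicative.toAdd b k)
      map_one' := by simp
      map_mul' := fun b b' => by
        show (∏ k, p k ^ (Multiplicative.toAdd b k + Multiplicative.toAdd b' k)) =
          (∏ k, p k ^ Multiplicative.toAdd b k) * (∏ k, p k ^ Multiplicative.toAdd b' k)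
        rw [← Finset.prod_mul_distrib]
        exact Finset.prod_congr rfl fun k _ => zpow_add₀ (hpne k) _ _ }
  let E : Laur n (KK l n) →ₐ[KK l n] Kbar l n :=
    AddMonoidAlgebra.lift (KK l n) (Kbar l n) (Fin n → ℤ) mh
  have E_single : ∀ (m : Fin n → ℤ) (c : KK l n),
      E (AddMonoidAlgebra.single m c) = algebraMap (KK l n) (Kbar l n) c *
        ∏ k, (p k) ^ (m k) := by
    intro m c
    rw [AddMonoidAlgebra.lift_single, Algebra.smul_def]
    rfl
  have E_lmono : ∀ b : Fin n → ℤ, E (lmono b) = ∏ k, (p k) ^ (b k) := by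
    intro b
    rw [lmono, E_single, map_one, one_mul]
  have E_lmono_single : ∀ k : Fin n, E (lmono (Pi.single k 1)) = p k := by
    intro k
    rw [E_lmono]
    rw [Finset.prod_eq_single k (fun b _ hb => by rw [Pi.single_eq_of_ne hb, zpow_zero])
      (fun h => absurd (Finset.mem_univ k) h)]
    rw [Pi.single_eq_same, zpow_one]
  have hχconst : ∀ c : KK l n, E.toRingHom (AddMonoidAlgebra.single 0 c)
      = algebraMap (KK l n) (Kbar l n) c := by
    intro c
    show E (AddMonoidAlgebra.single 0 c) = _
    rw [E_single]
    simp
  have hEfun : (fun k => E.toRingHom (lmono (Pi.single k 1))) = p :=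
    funext fun k => E_lmono_single k
  have hEval : ∀ g : Laur n ℂ, E (laurMap (cC l n) g) = laurEval (cbar l n) p g := by
    intro g
    have := chi_laurMap E.toRingHom hχconst g
    rwa [hEfun] at this
  have hFP : IsUnit (E.toRingHom (FProd f (RingHom.id (KK l n)))) := by
    rw [FProd, map_prod]
    apply isUnit_iff_ne_zero.mpr
    rw [Finset.prod_ne_zero_iff]
    intro i _
    show E (fImg f (RingHom.id (KK l n)) i) ≠ 0
    rw [fImg_id_eq, hEval]
    exact hfne i
  let Ehat : OXK f →+* Kbar l n :=
    Localization.awayLift E.toRingHom (FProd f (RingHom.id (KK l n))) hFP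
  have hlift : ∀ g : Laur n (KK l n),
      Ehat (algebraMap (Laur n (KK l n)) (OXK f) g) = E g :=
    fun g => IsLocalization.Away.lift_eq _ hFP g
  have hcomK : ∀ c : KK l n,
      Ehat (algebraMap (KK l n) (OXK f) c) = algebraMap (KK l n) (Kbar l n) c := by
    intro c
    have h1 : algebraMap (KK l n) (OXK f) c
        = algebraMap (Laur n (KK l n)) (OXK f) (AddMonoidAlgebra.single 0 c) := by
      rw [IsScalarTower.algebraMap_apply (KK l n) (Laur n (KK l n)) (OXK f),
        AddMonoidAlgebra.coe_algebraMap]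
      simp
    rw [h1, hlift]
    exact hχconst c
  have hψmul : ∀ u : (OXK f)ˣ, Ehat u.val * Ehat ((u⁻¹ : (OXK f)ˣ) : OXK f) = 1 := by
    intro u
    rw [← map_mul, Units.mul_inv, map_one]
  have hxval : ∀ k, Ehat ((xU f (RingHom.id (KK l n)) k).val) = p k := by
    intro k
    rw [show (xU f (RingHom.id (KK l n)) k).val
      = algebraMap (Laur n (KK l n)) (OXK f) (lmono (Pi.single k 1)) from rfl, hlift]
    exact E_lmono_single k
  have hxinv : ∀ k, Ehat (((xU f (RingHom.id (KK l n)) k)⁻¹ : (OXK f)ˣ) : OXK f)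
      = (p k)⁻¹ := by
    intro k
    rw [← hxval k]
    exact (inv_eq_of_mul_eq_one_right (hψmul (xU f (RingHom.id (KK l n)) k))).symm
  have hfval : ∀ i, Ehat ((fU f (RingHom.id (KK l n)) i).val)
      = laurEval (cbar l n) p (f i) := by
    intro i
    rw [show (fU f (RingHom.id (KK l n)) i).val
      = algebraMap (Laur n (KK l n)) (OXK f) (fImg f (RingHom.id (KK l n)) i)
      from IsUnit.unit_spec _, hlift]
    show E (fImg f (RingHom.id (KK l n)) i) = _
    rw [fImg_id_eq, hEval]
  have hfinv : ∀ i, Ehat (((fU f (RingHom.id (KK l n)) i)⁻¹ : (OXK f)ˣ) : OXK f)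
      = (laurEval (cbar l n) p (f i))⁻¹ := by
    intro i
    rw [← hfval i]
    exact (inv_eq_of_mul_eq_one_right (hψmul (fU f (RingHom.id (KK l n)) i))).symm
  have hpd : ∀ (i : Fin l) (j : Fin n), Ehat (algebraMap (Laur n (KK l n)) (OXK f)
      (lpderiv j (fImg f (RingHom.id (KK l n)) i)))
      = laurEval (cbar l n) p (lpderiv j (f i)) := by
    intro i j
    rw [hlift]
    show E (lpderiv j (fImg f (RingHom.id (KK l n)) i)) = _
    rw [fImg_id_eq, lpderiv_laurMap]
    exact hEval _
  have hkill : ∀ a ∈ likeIdeal f, Ehat a = 0 := by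
    intro a ha
    rw [likeIdeal] at ha
    refine Submodule.span_induction ?_ ?_ ?_ ?_ ha
    · rintro g ⟨j, rfl⟩
      rw [wElt, map_sub, map_mul, map_sum]
      simp only [map_mul]
      simp only [hcomK, hxinv, hfinv, hpd]
      exact hweq j
    · exact map_zero _
    · intro a b _ _ ha hb; rw [map_add, ha, hb, add_zero]
    · intro c a _ ha
      rw [smul_eq_mul, map_mul, ha, mul_zero]
  let ψ0 : (OXK f ⧸ likeIdeal f) →+* Kbar l n := Ideal.Quotient.lift (likeIdeal f) Ehat hkill
  let ψ : (OXK f ⧸ likeIdeal f) →ₐ[KK l n] Kbar l n :=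
    { toRingHom := ψ0
      commutes' := fun c => by
        show ψ0 (Ideal.Quotient.mk (likeIdeal f) (algebraMap (KK l n) (OXK f) c)) = _
        rw [Ideal.Quotient.lift_mk]
        exact hcomK c }
  refine ⟨ψ, fun k => ?_, fun i => ?_⟩
  · show ψ0 (Ideal.Quotient.mk (likeIdeal f) _) = _
    rw [Ideal.Quotient.lift_mk]
    exact hxval k
  · show ψ0 (Ideal.Quotient.mk (likeIdeal f) _) = _
    rw [Ideal.Quotient.lift_mk]
    exact hfinv i
end Bridge2


/- STATEMENT 13 -/
theorem stmt13 {l n : ℕ} (hn : 1 ≤ n) (hl : 1 ≤ l)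
    (f : Fin l → Laur n ℂ) (hf : ∀ i, f i ≠ 0)
    [FiniteDimensional (KK l n) (OXK f ⧸ likeIdeal f)]
    (hnz : Nontrivial (OXK f ⧸ likeIdeal f)) :
    (∀ k : Fin n,
      {z : Kbar l n | Polynomial.aeval z
          (LinearMap.charpoly (LinearMap.mulLeft (KK l n)
            (Ideal.Quotient.mk (likeIdeal f)
              ↑(xU f (RingHom.id (KK l n)) k)))) = 0} =
        {z : Kbar l n | ∃ p ∈ critSet f, z = p k}) ∧
    (∀ i : Fin l,
      {z : Kbar l n | Polynomial.aeval z
          (LinearMap.charpoly (LinearMap.mulLeft (KK l n)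
            (Ideal.Quotient.mk (likeIdeal f)
              ↑(fU f (RingHom.id (KK l n)) i)⁻¹))) = 0} =
        {z : Kbar l n | ∃ p ∈ critSet f, z = (laurEval (cbar l n) p (f i))⁻¹}) := by
  constructor
  · intro k
    ext z
    simp only [Set.mem_setOf_eq]
    rw [aeval_charpoly_mulLeft_eq_zero_iff (F := KK l n) (B := OXK f ⧸ likeIdeal f)
      (Kbar l n) (Ideal.Quotient.mk (likeIdeal f) ((xU f (RingHom.id (KK l n)) k).val)) z]
    constructor
    · rintro ⟨ψ, hψ⟩
      obtain ⟨p, hpc, hxk, _⟩ := hom_to_point f ψ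
      exact ⟨p, hpc, by rw [← hψ, hxk k]⟩
    · rintro ⟨p, hpc, hz⟩
      obtain ⟨ψ, hxk, _⟩ := point_to_hom f p hpc
      exact ⟨ψ, by rw [hxk k, hz]⟩
  · intro i
    ext z
    simp only [Set.mem_setOf_eq]
    rw [aeval_charpoly_mulLeft_eq_zero_iff (F := KK l n) (B := OXK f ⧸ likeIdeal f)
      (Kbar l n) (Ideal.Quotient.mk (likeIdeal f)
        (((fU f (RingHom.id (KK l n)) i)⁻¹ : (OXK f)ˣ).val)) z]
    constructor
    · rintro ⟨ψ, hψ⟩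
      obtain ⟨p, hpc, _, hfinv⟩ := hom_to_point f ψ
      exact ⟨p, hpc, by rw [← hψ, hfinv i]⟩
    · rintro ⟨p, hpc, hz⟩
      obtain ⟨ψ, _, hfinv⟩ := point_to_hom f p hpc
      exact ⟨ψ, by rw [hfinv i, hz]⟩

end
end
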